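/- arXiv:1404.3303 — 5 statements merged into one kernel-verified Lean document; each statement's English description precedes it below -/
import Mathlib

section
/- Let Θ be a real random variable with normal distribution N(μ, τ²) and Y an independent real random variable with normal distribution N(0, σ²), where σ, τ > 0, and set X = Θ + Y. Then the conditional expectation of Θ given X satisfies, almost surely, E[Θ | X] = X + σ²/(σ² + τ²) · (μ − X). -/
open MeasureTheory ProbabilityTheory Real NNReal ENNReal

namespace BayesGaussAux
set_option maxHeartbeats 1000000


lemma pdf_as_exp (v : ℝ≥0) :
    (fun x : ℝ => x * gaussianPDFReal 0 v x)
      = fun x => (Real.sqrt (2 * π * v))⁻¹ * (x * rexp (-(2 * (v:ℝ))⁻¹ * x ^ 2)) := by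
  funext x
  have h : -(x - 0) ^ 2 / (2 * (v:ℝ)) = -(2 * (v:ℝ))⁻¹ * x ^ 2 := by
    field_simp
    ring
  rw [gaussianPDFReal, h]; ring

lemma integrable_id_mul_pdf0 (v : ℝ≥0) (hv : v ≠ 0) :
    Integrable (fun x : ℝ => x * gaussianPDFReal 0 v x) := by
  rw [pdf_as_exp v]
  have hb : (0:ℝ) < (2 * (v:ℝ))⁻¹ := by positivity
  exact (integrable_mul_exp_neg_mul_sq hb).const_mul _

lemma integral_id_mul_pdf0 (v : ℝ≥0) :
    ∫ x : ℝ, x * gaussianPDFReal 0 v x = 0 := by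
  have hodd : ∀ x : ℝ, (-x) * gaussianPDFReal 0 v (-x) = -(x * gaussianPDFReal 0 v x) := by
    intro x
    have : gaussianPDFReal 0 v (-x) = gaussianPDFReal 0 v x := by
      simp only [gaussianPDFReal]
      ring_nf
    rw [this]; ring
  have h := integral_neg_eq_self (fun x : ℝ => x * gaussianPDFReal 0 v x) volume
  simp only [hodd, integral_neg] at h
  linarith [h]

lemma integrable_id_mul_pdf (m : ℝ) (v : ℝ≥0) (hv : v ≠ 0) :
    Integrable (fun x : ℝ => x * gaussianPDFReal m v x) := by
  have hsub : ∀ x : ℝ, gaussianPDFReal m v x = gaussianPDFReal 0 v (x - m) := by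
    intro x; rw [gaussianPDFReal_sub, zero_add]
  have h1 : Integrable (fun x : ℝ => (x - m) * gaussianPDFReal 0 v (x - m)) :=
    (integrable_id_mul_pdf0 v hv).comp_sub_right m
  have h2 : Integrable (fun x : ℝ => m * gaussianPDFReal m v x) :=
    (integrable_gaussianPDFReal m v).const_mul m
  have := h1.add h2
  refine this.congr (Filter.Eventually.of_forall fun x => ?_)
  simp only [Pi.add_apply]
  rw [hsub x]; ring

lemma integrable_abs_mul_pdf (m : ℝ) (v : ℝ≥0) (hv : v ≠ 0) :
    Integrable (fun x : ℝ => |x| * gaussianPDFReal m v x) := by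
  refine (integrable_id_mul_pdf m v hv).abs.congr (Filter.Eventually.of_forall fun x => ?_)
  simp only []
  rw [abs_mul, abs_of_nonneg (gaussianPDFReal_nonneg m v x)]

lemma integral_id_mul_pdf (m : ℝ) (v : ℝ≥0) (hv : v ≠ 0) :
    ∫ x : ℝ, x * gaussianPDFReal m v x = m := by
  have hsub : ∀ x : ℝ, gaussianPDFReal m v x = gaussianPDFReal 0 v (x - m) := by
    intro x; rw [gaussianPDFReal_sub, zero_add]
  have h1 : Integrable (fun x : ℝ => (x - m) * gaussianPDFReal 0 v (x - m)) :=
    (integrable_id_mul_pdf0 v hv).comp_sub_right m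
  have h2 : Integrable (fun x : ℝ => m * gaussianPDFReal m v x) :=
    (integrable_gaussianPDFReal m v).const_mul m
  have hswap : (fun x : ℝ => x * gaussianPDFReal m v x)
      = fun x => (x - m) * gaussianPDFReal 0 v (x - m) + m * gaussianPDFReal m v x := by
    funext x; rw [hsub x]; ring
  rw [hswap, integral_add h1 h2]
  rw [integral_sub_right_eq_self (fun u : ℝ => u * gaussianPDFReal 0 v u) m]
  rw [integral_id_mul_pdf0 v, integral_const_mul, integral_gaussianPDFReal_eq_one m hv]
  ring

lemma pdf_factorization (μ : ℝ) {σ τ : ℝ} (hσ : 0 < σ) (hτ : 0 < τ) (x θ : ℝ) :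
    gaussianPDFReal μ ((τ ^ 2).toNNReal) θ * gaussianPDFReal 0 ((σ ^ 2).toNNReal) (x - θ) =
    gaussianPDFReal μ ((σ ^ 2 + τ ^ 2).toNNReal) x *
      gaussianPDFReal (x + σ ^ 2 / (σ ^ 2 + τ ^ 2) * (μ - x))
        ((σ ^ 2 * τ ^ 2 / (σ ^ 2 + τ ^ 2)).toNNReal) θ := by
  have hs : (0:ℝ) < σ ^ 2 := by positivity
  have ht : (0:ℝ) < τ ^ 2 := by positivity
  have hst : (0:ℝ) < σ ^ 2 + τ ^ 2 := by positivity
  have hv : (0:ℝ) < σ ^ 2 * τ ^ 2 / (σ ^ 2 + τ ^ 2) := by positivity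
  simp only [gaussianPDFReal, Real.coe_toNNReal _ hs.le, Real.coe_toNNReal _ ht.le,
    Real.coe_toNNReal _ hst.le, Real.coe_toNNReal _ hv.le]
  rw [mul_mul_mul_comm, mul_mul_mul_comm ((√(2 * π * (σ ^ 2 + τ ^ 2)))⁻¹), ← Real.exp_add,
    ← Real.exp_add]
  have hπ : (0:ℝ) < π := Real.pi_pos
  congr 1
  · rw [← mul_inv, ← mul_inv, ← Real.sqrt_mul (by positivity), ← Real.sqrt_mul (by positivity)]
    congr 2
    field_simp
  · congr 1
    field_simp
    ring

lemma integral_gaussianReal_eq (m : ℝ) {v : ℝ≥0} (hv : v ≠ 0) (w : ℝ → ℝ) :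
    ∫ y, w y ∂(gaussianReal m v) = ∫ y, gaussianPDFReal m v y * w y := by
  rw [gaussianReal_of_var_ne_zero m hv]
  have hd : gaussianPDF m v = fun x => ((gaussianPDFReal m v x).toNNReal : ℝ≥0∞) := by
    funext x; rfl
  rw [hd, integral_withDensity_eq_integral_smul (measurable_gaussianPDFReal m v).real_toNNReal w]
  congr 1; funext y
  rw [NNReal.smul_def, Real.coe_toNNReal _ (gaussianPDFReal_nonneg m v y), smul_eq_mul]

lemma integrable_gaussianReal_iff (m : ℝ) {v : ℝ≥0} (hv : v ≠ 0) (w : ℝ → ℝ) :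
    Integrable w (gaussianReal m v) ↔
      Integrable (fun x => w x * gaussianPDFReal m v x) volume := by
  rw [gaussianReal_of_var_ne_zero m hv, gaussianPDF_def,
    integrable_withDensity_iff (measurable_gaussianPDFReal m v).ennreal_ofReal
      (Filter.Eventually.of_forall fun x => ENNReal.ofReal_lt_top)]
  refine integrable_congr (Filter.Eventually.of_forall fun x => ?_)
  simp only [ENNReal.toReal_ofReal (gaussianPDFReal_nonneg m v x)]

lemma integrable_id_gaussianReal (m : ℝ) {v : ℝ≥0} (hv : v ≠ 0) :
    Integrable (fun x : ℝ => x) (gaussianReal m v) := by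
  rw [integrable_gaussianReal_iff m hv]
  exact integrable_id_mul_pdf m v hv



set_option maxHeartbeats 1000000

lemma lhs_val (μ : ℝ) {σ τ : ℝ} (hσ : 0 < σ) (hτ : 0 < τ) (A : Set ℝ) (hA : MeasurableSet A) :
    ∫ p : ℝ × ℝ, A.indicator (fun _ => (1:ℝ)) (p.1 + p.2) * p.1
      ∂((gaussianReal μ ((τ^2).toNNReal)).prod (gaussianReal 0 ((σ^2).toNNReal)))
    = ∫ x : ℝ, A.indicator (fun _ => (1:ℝ)) x *
        ((x + σ^2/(σ^2+τ^2)*(μ - x)) * gaussianPDFReal μ ((σ^2+τ^2).toNNReal) x) := by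
  have ht2 : ((τ^2).toNNReal) ≠ 0 := (Real.toNNReal_pos.mpr (by positivity)).ne'
  have hs2 : ((σ^2).toNNReal) ≠ 0 := (Real.toNNReal_pos.mpr (by positivity)).ne'
  have hvq2 : ((σ^2*τ^2/(σ^2+τ^2)).toNNReal) ≠ 0 := (Real.toNNReal_pos.mpr (by positivity)).ne'
  set f := gaussianPDFReal μ ((τ^2).toNNReal) with hfd
  set g := gaussianPDFReal 0 ((σ^2).toNNReal) with hgd
  set k := gaussianPDFReal μ ((σ^2+τ^2).toNNReal) with hkd
  set vq := ((σ^2*τ^2/(σ^2+τ^2)).toNNReal) with hvqd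
  set P := gaussianReal μ ((τ^2).toNNReal) with hPd
  set Q := gaussianReal 0 ((σ^2).toNNReal) with hQd
  have hfm : Measurable f := measurable_gaussianPDFReal _ _
  have hgm : Measurable g := measurable_gaussianPDFReal _ _
  have hkm : Measurable k := measurable_gaussianPDFReal _ _
  have hfnn : ∀ x, 0 ≤ f x := gaussianPDFReal_nonneg _ _
  have hgnn : ∀ x, 0 ≤ g x := gaussianPDFReal_nonneg _ _
  have hfac : ∀ x θ : ℝ, f θ * g (x - θ)
      = k x * gaussianPDFReal (x + σ^2/(σ^2+τ^2)*(μ - x)) vq θ := by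
    intro x θ
    rw [hfd, hgd, hkd, hvqd]
    exact pdf_factorization μ hσ hτ x θ
  have hind : Measurable (A.indicator (fun _ => (1:ℝ))) := measurable_const.indicator hA
  have hindle : ∀ x, |A.indicator (fun _ => (1:ℝ)) x| ≤ 1 := by
    intro x; by_cases h : x ∈ A <;> simp [h]
  -- integrability of the integrand on the product measure
  have hFm : Measurable (fun p : ℝ × ℝ => A.indicator (fun _ => (1:ℝ)) (p.1 + p.2) * p.1) :=
    (hind.comp (measurable_fst.add measurable_snd)).mul measurable_fst
  have hfstint : Integrable (fun p : ℝ × ℝ => p.1) (P.prod Q) := by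
    have hmap : Measure.map Prod.fst (P.prod Q) = P := by
      rw [Measure.map_fst_prod]; simp
    have h1 : Integrable (fun x : ℝ => x) (Measure.map Prod.fst (P.prod Q)) := by
      rw [hmap, hPd]; exact integrable_id_gaussianReal μ ht2
    exact (integrable_map_measure aestronglyMeasurable_id measurable_fst.aemeasurable).mp h1
  have hFint : Integrable (fun p : ℝ × ℝ => A.indicator (fun _ => (1:ℝ)) (p.1 + p.2) * p.1)
      (P.prod Q) := by
    refine hfstint.mono hFm.aestronglyMeasurable (Filter.Eventually.of_forall fun p => ?_)
    rw [Real.norm_eq_abs, Real.norm_eq_abs, abs_mul]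
    exact mul_le_of_le_one_left (abs_nonneg _) (hindle _)
  rw [integral_prod _ hFint]
  -- inner integral : translate
  have hinner : ∀ θ : ℝ, (∫ y, A.indicator (fun _ => (1:ℝ)) (θ + y) * θ ∂Q)
      = ∫ x : ℝ, g (x - θ) * (A.indicator (fun _ => (1:ℝ)) x * θ) := by
    intro θ
    rw [hQd, integral_gaussianReal_eq 0 hs2, ← hgd]
    rw [← integral_add_left_eq_self
      (fun z : ℝ => g (z - θ) * (A.indicator (fun _ => (1:ℝ)) z * θ)) θ]
    congr 1; funext y
    simp [add_sub_cancel_left]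
  simp_rw [hinner]
  rw [hPd, integral_gaussianReal_eq μ ht2, ← hfd]
  simp_rw [← integral_const_mul]
  -- now a double Lebesgue integral; swap
  have hGdm : Measurable (fun p : ℝ × ℝ => |p.1| * (f p.1 * g (p.2 - p.1))) :=
    (measurable_fst.abs).mul ((hfm.comp measurable_fst).mul
      (hgm.comp (measurable_snd.sub measurable_fst)))
  have hGd : Integrable (fun p : ℝ × ℝ => |p.1| * (f p.1 * g (p.2 - p.1)))
      (volume.prod volume) := by
    rw [integrable_prod_iff hGdm.aestronglyMeasurable]
    constructor
    · refine Filter.Eventually.of_forall fun θ => ?_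
      have : Integrable (fun x : ℝ => g (x - θ)) volume := by
        rw [hgd]; exact (integrable_gaussianPDFReal 0 _).comp_sub_right θ
      exact ((this.const_mul (f θ)).const_mul |θ|)
    · have heq : (fun θ : ℝ => ∫ x : ℝ, ‖|θ| * (f θ * g (x - θ))‖)
          = fun θ : ℝ => |θ| * f θ := by
        funext θ
        have hnn : ∀ x : ℝ, ‖|θ| * (f θ * g (x - θ))‖ = (|θ| * f θ) * g (x - θ) := by
          intro x
          rw [Real.norm_eq_abs, abs_mul, abs_abs, abs_mul,
            abs_of_nonneg (hfnn θ), abs_of_nonneg (hgnn (x - θ))]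
          ring
        simp_rw [hnn]
        rw [integral_const_mul, integral_sub_right_eq_self g θ, hgd,
          integral_gaussianPDFReal_eq_one 0 hs2, mul_one]
      rw [heq, hfd]
      exact integrable_abs_mul_pdf μ _ ht2
  have hU : Integrable (Function.uncurry fun θ x : ℝ =>
      f θ * (g (x - θ) * (A.indicator (fun _ => (1:ℝ)) x * θ))) (volume.prod volume) := by
    refine hGd.mono ?_ (Filter.Eventually.of_forall fun p => ?_)
    · exact ((hfm.comp measurable_fst).mul ((hgm.comp (measurable_snd.sub measurable_fst)).mul
        ((hind.comp measurable_snd).mul measurable_fst))).aestronglyMeasurable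
    · show ‖f p.1 * (g (p.2 - p.1) * (A.indicator (fun _ => (1:ℝ)) p.2 * p.1))‖
        ≤ ‖|p.1| * (f p.1 * g (p.2 - p.1))‖
      rw [Real.norm_eq_abs, Real.norm_eq_abs]
      have e1 : |f p.1 * (g (p.2 - p.1) * (A.indicator (fun _ => (1:ℝ)) p.2 * p.1))|
          = (f p.1 * g (p.2 - p.1) * |p.1|) * |A.indicator (fun _ => (1:ℝ)) p.2| := by
        rw [abs_mul, abs_mul, abs_mul, abs_of_nonneg (hfnn _), abs_of_nonneg (hgnn _)]
        ring
      have e2 : abs (|p.1| * (f p.1 * g (p.2 - p.1))) = f p.1 * g (p.2 - p.1) * |p.1| := by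
        rw [abs_mul, abs_abs, abs_of_nonneg (mul_nonneg (hfnn _) (hgnn _))]
        ring
      rw [e1, e2]
      exact mul_le_of_le_one_right (mul_nonneg (mul_nonneg (hfnn _) (hgnn _)) (abs_nonneg _)) (hindle _)
  rw [integral_integral_swap hU]
  -- inner integral in θ via the factorization
  have hfin : ∀ x : ℝ, (∫ θ : ℝ, f θ * (g (x - θ) * (A.indicator (fun _ => (1:ℝ)) x * θ)))
      = A.indicator (fun _ => (1:ℝ)) x * ((x + σ^2/(σ^2+τ^2)*(μ - x)) * k x) := by
    intro x
    have hrw : (fun θ : ℝ => f θ * (g (x - θ) * (A.indicator (fun _ => (1:ℝ)) x * θ)))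
        = fun θ : ℝ => (A.indicator (fun _ => (1:ℝ)) x * k x) *
            (θ * gaussianPDFReal (x + σ^2/(σ^2+τ^2)*(μ - x)) vq θ) := by
      funext θ
      have h1 : f θ * (g (x - θ) * (A.indicator (fun _ => (1:ℝ)) x * θ))
          = (f θ * g (x - θ)) * (A.indicator (fun _ => (1:ℝ)) x * θ) := by ring
      rw [h1, hfac x θ]
      ring
    rw [hrw, integral_const_mul, integral_id_mul_pdf _ vq hvq2]
    ring
  simp_rw [hfin]


lemma rhs_val (μ : ℝ) {σ τ : ℝ} (hσ : 0 < σ) (hτ : 0 < τ) (A : Set ℝ) (hA : MeasurableSet A) :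
    ∫ p : ℝ × ℝ, A.indicator (fun _ => (1:ℝ)) (p.1 + p.2) *
        ((p.1 + p.2) + σ^2/(σ^2+τ^2)*(μ - (p.1 + p.2)))
      ∂((gaussianReal μ ((τ^2).toNNReal)).prod (gaussianReal 0 ((σ^2).toNNReal)))
    = ∫ x : ℝ, A.indicator (fun _ => (1:ℝ)) x *
        ((x + σ^2/(σ^2+τ^2)*(μ - x)) * gaussianPDFReal μ ((σ^2+τ^2).toNNReal) x) := by
  have ht2 : ((τ^2).toNNReal) ≠ 0 := (Real.toNNReal_pos.mpr (by positivity)).ne'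
  have hs2 : ((σ^2).toNNReal) ≠ 0 := (Real.toNNReal_pos.mpr (by positivity)).ne'
  have hvq2 : ((σ^2*τ^2/(σ^2+τ^2)).toNNReal) ≠ 0 := (Real.toNNReal_pos.mpr (by positivity)).ne'
  have hc0 : (0:ℝ) ≤ σ^2/(σ^2+τ^2) := by positivity
  set c := σ^2/(σ^2+τ^2) with hcd
  set f := gaussianPDFReal μ ((τ^2).toNNReal) with hfd
  set g := gaussianPDFReal 0 ((σ^2).toNNReal) with hgd
  set k := gaussianPDFReal μ ((σ^2+τ^2).toNNReal) with hkd
  set vq := ((σ^2*τ^2/(σ^2+τ^2)).toNNReal) with hvqd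
  set P := gaussianReal μ ((τ^2).toNNReal) with hPd
  set Q := gaussianReal 0 ((σ^2).toNNReal) with hQd
  have hfm : Measurable f := measurable_gaussianPDFReal _ _
  have hgm : Measurable g := measurable_gaussianPDFReal _ _
  have hkm : Measurable k := measurable_gaussianPDFReal _ _
  have hfnn : ∀ x, 0 ≤ f x := gaussianPDFReal_nonneg _ _
  have hgnn : ∀ x, 0 ≤ g x := gaussianPDFReal_nonneg _ _
  have hknn : ∀ x, 0 ≤ k x := gaussianPDFReal_nonneg _ _
  have hfac : ∀ x θ : ℝ, f θ * g (x - θ)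
      = k x * gaussianPDFReal (x + c*(μ - x)) vq θ := by
    intro x θ
    rw [hfd, hgd, hkd, hvqd, hcd]
    exact pdf_factorization μ hσ hτ x θ
  have hφnm : Measurable (fun p : ℝ × ℝ => gaussianPDFReal (p.2 + c*(μ - p.2)) vq p.1) := by
    simp only [gaussianPDFReal]
    fun_prop
  have hφR : Measurable (fun z : ℝ => z + c*(μ - z)) := by fun_prop
  have habs_φ : ∀ u : ℝ, |u + c*(μ - u)| ≤ |u| + c * (|μ| + |u|) := by
    intro u
    calc |u + c*(μ - u)| ≤ |u| + |c*(μ - u)| := abs_add_le _ _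
    _ = |u| + c * |μ - u| := by rw [abs_mul, abs_of_nonneg hc0]
    _ ≤ |u| + c * (|μ| + |u|) := by
        have h1 : |μ - u| ≤ |μ| + |u| := abs_sub _ _
        nlinarith
  have hind : Measurable (A.indicator (fun _ => (1:ℝ))) := measurable_const.indicator hA
  have hindle : ∀ x, |A.indicator (fun _ => (1:ℝ)) x| ≤ 1 := by
    intro x; by_cases h : x ∈ A <;> simp [h]
  -- integrability on the product measure
  have hsum : Measurable (fun p : ℝ × ℝ => p.1 + p.2) := measurable_fst.add measurable_snd
  have hFm : Measurable (fun p : ℝ × ℝ => A.indicator (fun _ => (1:ℝ)) (p.1 + p.2) *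
      ((p.1 + p.2) + c*(μ - (p.1 + p.2)))) :=
    (hind.comp hsum).mul (hφR.comp hsum)
  have hfstint : Integrable (fun p : ℝ × ℝ => p.1) (P.prod Q) := by
    have hmap : Measure.map Prod.fst (P.prod Q) = P := by
      rw [Measure.map_fst_prod]; simp
    have h1 : Integrable (fun x : ℝ => x) (Measure.map Prod.fst (P.prod Q)) := by
      rw [hmap, hPd]; exact integrable_id_gaussianReal μ ht2
    exact (integrable_map_measure aestronglyMeasurable_id measurable_fst.aemeasurable).mp h1
  have hsndint : Integrable (fun p : ℝ × ℝ => p.2) (P.prod Q) := by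
    have hmap : Measure.map Prod.snd (P.prod Q) = Q := by
      rw [Measure.map_snd_prod]; simp
    have h1 : Integrable (fun x : ℝ => x) (Measure.map Prod.snd (P.prod Q)) := by
      rw [hmap, hQd]; exact integrable_id_gaussianReal 0 hs2
    exact (integrable_map_measure aestronglyMeasurable_id measurable_snd.aemeasurable).mp h1
  have habsint : Integrable (fun p : ℝ × ℝ => |p.1 + p.2|) (P.prod Q) :=
    (hfstint.add hsndint).abs
  have hDint : Integrable (fun p : ℝ × ℝ => |p.1 + p.2| + c * (|μ| + |p.1 + p.2|)) (P.prod Q) :=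
    habsint.add (((integrable_const |μ|).add habsint).const_mul c)
  have hFint : Integrable (fun p : ℝ × ℝ => A.indicator (fun _ => (1:ℝ)) (p.1 + p.2) *
      ((p.1 + p.2) + c*(μ - (p.1 + p.2)))) (P.prod Q) := by
    refine hDint.mono hFm.aestronglyMeasurable (Filter.Eventually.of_forall fun p => ?_)
    rw [Real.norm_eq_abs, Real.norm_eq_abs, abs_mul]
    have h1 : |A.indicator (fun _ => (1:ℝ)) (p.1 + p.2)| * |(p.1 + p.2) + c*(μ - (p.1 + p.2))|
        ≤ |(p.1 + p.2) + c*(μ - (p.1 + p.2))| :=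
      mul_le_of_le_one_left (abs_nonneg _) (hindle _)
    have h2 := habs_φ (p.1 + p.2)
    have h3 : |p.1 + p.2| + c * (|μ| + |p.1 + p.2|)
        ≤ |(|p.1 + p.2| + c * (|μ| + |p.1 + p.2|))| := le_abs_self _
    linarith
  rw [integral_prod _ hFint]
  have hinner : ∀ θ : ℝ, (∫ y, A.indicator (fun _ => (1:ℝ)) (θ + y) *
      ((θ + y) + c*(μ - (θ + y))) ∂Q)
      = ∫ x : ℝ, g (x - θ) * (A.indicator (fun _ => (1:ℝ)) x * (x + c*(μ - x))) := by
    intro θ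
    rw [hQd, integral_gaussianReal_eq 0 hs2, ← hgd]
    rw [← integral_add_left_eq_self
      (fun z : ℝ => g (z - θ) * (A.indicator (fun _ => (1:ℝ)) z * (z + c*(μ - z)))) θ]
    congr 1; funext y
    simp [add_sub_cancel_left]
  simp_rw [hinner]
  rw [hPd, integral_gaussianReal_eq μ ht2, ← hfd]
  simp_rw [← integral_const_mul]
  -- swap the two Lebesgue integrals
  have hGdm : Measurable (fun p : ℝ × ℝ =>
      ((|p.2| + c * (|μ| + |p.2|)) * k p.2) * gaussianPDFReal (p.2 + c*(μ - p.2)) vq p.1) := by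
    refine Measurable.mul ?_ hφnm
    fun_prop
  have hGd : Integrable (fun p : ℝ × ℝ =>
      ((|p.2| + c * (|μ| + |p.2|)) * k p.2) * gaussianPDFReal (p.2 + c*(μ - p.2)) vq p.1)
      (volume.prod volume) := by
    rw [integrable_prod_iff' hGdm.aestronglyMeasurable]
    constructor
    · refine Filter.Eventually.of_forall fun x => ?_
      show Integrable (fun θ : ℝ =>
        ((|x| + c * (|μ| + |x|)) * k x) * gaussianPDFReal (x + c*(μ - x)) vq θ) volume
      exact (integrable_gaussianPDFReal _ _).const_mul _
    · show Integrable (fun x : ℝ => ∫ θ : ℝ, ‖((|x| + c * (|μ| + |x|)) * k x) *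
          gaussianPDFReal (x + c*(μ - x)) vq θ‖) volume
      have heq : (fun x : ℝ => ∫ θ : ℝ, ‖((|x| + c * (|μ| + |x|)) * k x) *
          gaussianPDFReal (x + c*(μ - x)) vq θ‖)
          = fun x : ℝ => (|x| + c * (|μ| + |x|)) * k x := by
        funext x
        have hnn : ∀ θ : ℝ, ‖((|x| + c * (|μ| + |x|)) * k x) *
            gaussianPDFReal (x + c*(μ - x)) vq θ‖
            = ((|x| + c * (|μ| + |x|)) * k x) * gaussianPDFReal (x + c*(μ - x)) vq θ := by
          intro θ
          rw [Real.norm_eq_abs, abs_of_nonneg]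
          have h0 : (0:ℝ) ≤ |x| + c * (|μ| + |x|) := by positivity
          exact mul_nonneg (mul_nonneg h0 (hknn x)) (gaussianPDFReal_nonneg _ _ _)
        simp_rw [hnn]
        rw [integral_const_mul, integral_gaussianPDFReal_eq_one _ hvq2, mul_one]
      rw [heq]
      have h1 : Integrable (fun x : ℝ => |x| * k x) volume := by
        rw [hkd]
        exact integrable_abs_mul_pdf μ _ (Real.toNNReal_pos.mpr (by positivity)).ne'
      have h2 : Integrable (fun x : ℝ => k x) volume := by
        rw [hkd]; exact integrable_gaussianPDFReal _ _
      have h3 : Integrable (fun x : ℝ => |x| * k x + c * (|μ| * k x + |x| * k x)) volume :=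
        h1.add (((h2.const_mul |μ|).add h1).const_mul c)
      refine h3.congr (Filter.Eventually.of_forall fun x => ?_)
      ring
  have hU : Integrable (Function.uncurry fun θ x : ℝ =>
      f θ * (g (x - θ) * (A.indicator (fun _ => (1:ℝ)) x * (x + c*(μ - x)))))
      (volume.prod volume) := by
    refine hGd.mono ?_ (Filter.Eventually.of_forall fun p => ?_)
    · exact ((hfm.comp measurable_fst).mul ((hgm.comp (measurable_snd.sub measurable_fst)).mul
        ((hind.comp measurable_snd).mul (hφR.comp measurable_snd)))).aestronglyMeasurable
    · show ‖f p.1 * (g (p.2 - p.1) * (A.indicator (fun _ => (1:ℝ)) p.2 * (p.2 + c*(μ - p.2))))‖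
        ≤ ‖((|p.2| + c * (|μ| + |p.2|)) * k p.2) * gaussianPDFReal (p.2 + c*(μ - p.2)) vq p.1‖
      rw [Real.norm_eq_abs, Real.norm_eq_abs]
      have hpos : (0:ℝ) ≤ |p.2| + c * (|μ| + |p.2|) := by positivity
      have e1 : |f p.1 * (g (p.2 - p.1) * (A.indicator (fun _ => (1:ℝ)) p.2 * (p.2 + c*(μ - p.2))))|
          = (f p.1 * g (p.2 - p.1)) * (|A.indicator (fun _ => (1:ℝ)) p.2| * |p.2 + c*(μ - p.2)|) := by
        rw [abs_mul, abs_mul, abs_mul, abs_of_nonneg (hfnn _), abs_of_nonneg (hgnn _)]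
        ring
      have e2 : abs (((|p.2| + c * (|μ| + |p.2|)) * k p.2) *
          gaussianPDFReal (p.2 + c*(μ - p.2)) vq p.1)
          = (f p.1 * g (p.2 - p.1)) * ((|p.2| + c * (|μ| + |p.2|))) := by
        rw [abs_of_nonneg (mul_nonneg (mul_nonneg hpos (hknn _)) (gaussianPDFReal_nonneg _ _ _)),
          hfac p.2 p.1]
        ring
      rw [e1, e2]
      have hb : |A.indicator (fun _ => (1:ℝ)) p.2| * |p.2 + c*(μ - p.2)|
          ≤ |p.2| + c * (|μ| + |p.2|) :=
        le_trans (mul_le_of_le_one_left (abs_nonneg _) (hindle _)) (habs_φ p.2)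
      exact mul_le_mul_of_nonneg_left hb (mul_nonneg (hfnn _) (hgnn _))
  rw [integral_integral_swap hU]
  have hfin : ∀ x : ℝ, (∫ θ : ℝ, f θ * (g (x - θ) *
      (A.indicator (fun _ => (1:ℝ)) x * (x + c*(μ - x)))))
      = A.indicator (fun _ => (1:ℝ)) x * ((x + c*(μ - x)) * k x) := by
    intro x
    have hrw : (fun θ : ℝ => f θ * (g (x - θ) *
        (A.indicator (fun _ => (1:ℝ)) x * (x + c*(μ - x)))))
        = fun θ : ℝ => (A.indicator (fun _ => (1:ℝ)) x * ((x + c*(μ - x)) * k x)) *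
            gaussianPDFReal (x + c*(μ - x)) vq θ := by
      funext θ
      have h1 : f θ * (g (x - θ) * (A.indicator (fun _ => (1:ℝ)) x * (x + c*(μ - x))))
          = (f θ * g (x - θ)) * (A.indicator (fun _ => (1:ℝ)) x * (x + c*(μ - x))) := by ring
      rw [h1, hfac x θ]
      ring
    rw [hrw, integral_const_mul, integral_gaussianPDFReal_eq_one _ hvq2, mul_one]
  simp_rw [hfin]


end BayesGaussAux

open MeasureTheory ProbabilityTheory

set_option maxHeartbeats 1000000 in
/-- **Credibility premium formula in the Gaussian random shift model.**
If `Θ ∼ N(μ, τ²)`, `Y ∼ N(0, σ²)` are independent and `X = Θ + Y`, then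
`E[Θ | X] = X + σ²/(σ² + τ²) · (μ − X)` almost surely. -/
theorem bayes_premium_gaussian_random_shift
    {Ω : Type*} [MeasureSpace Ω] [IsProbabilityMeasure (ℙ : Measure Ω)]
    (μ σ τ : ℝ) (hσ : 0 < σ) (hτ : 0 < τ)
    (Θ Y : Ω → ℝ) (hΘmeas : Measurable Θ) (hYmeas : Measurable Y)
    (hΘ : Measure.map Θ ℙ = gaussianReal μ ((τ ^ 2).toNNReal))
    (hY : Measure.map Y ℙ = gaussianReal 0 ((σ ^ 2).toNNReal))
    (hindep : IndepFun Θ Y ℙ)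
    (X : Ω → ℝ) (hX : X = fun ω => Θ ω + Y ω) :
    (ℙ : Measure Ω)[Θ | MeasurableSpace.comap X (inferInstance : MeasurableSpace ℝ)] =ᵐ[ℙ]
      fun ω => X ω + σ ^ 2 / (σ ^ 2 + τ ^ 2) * (μ - X ω) := by
  
  have hXmeas : Measurable X := by rw [hX]; exact hΘmeas.add hYmeas
  have hm : MeasurableSpace.comap X (inferInstance : MeasurableSpace ℝ)
      ≤ (inferInstance : MeasurableSpace Ω) := hXmeas.comap_le
  have ht2 : ((τ^2).toNNReal) ≠ 0 := (Real.toNNReal_pos.mpr (by positivity)).ne'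
  have hs2 : ((σ^2).toNNReal) ≠ 0 := (Real.toNNReal_pos.mpr (by positivity)).ne'
  have hΘint : Integrable Θ ℙ := by
    have h1 : Integrable (fun x : ℝ => x) (Measure.map Θ ℙ) := by
      rw [hΘ]; exact BayesGaussAux.integrable_id_gaussianReal μ ht2
    exact (integrable_map_measure aestronglyMeasurable_id hΘmeas.aemeasurable).mp h1
  have hYint : Integrable Y ℙ := by
    have h1 : Integrable (fun x : ℝ => x) (Measure.map Y ℙ) := by
      rw [hY]; exact BayesGaussAux.integrable_id_gaussianReal 0 hs2
    exact (integrable_map_measure aestronglyMeasurable_id hYmeas.aemeasurable).mp h1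
  have hXint : Integrable X ℙ := by rw [hX]; exact hΘint.add hYint
  have hgint : Integrable (fun ω => X ω + σ^2/(σ^2+τ^2) * (μ - X ω)) ℙ := by
    have h : (fun ω => X ω + σ^2/(σ^2+τ^2) * (μ - X ω))
        = fun ω => (1 - σ^2/(σ^2+τ^2)) * X ω + σ^2/(σ^2+τ^2) * μ := by funext ω; ring
    rw [h]; exact (hXint.const_mul _).add (integrable_const _)
  have hjoint : Measure.map (fun ω => (Θ ω, Y ω)) ℙ
      = (gaussianReal μ ((τ^2).toNNReal)).prod (gaussianReal 0 ((σ^2).toNNReal)) := by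
    rw [← hΘ, ← hY]
    exact (indepFun_iff_map_prod_eq_prod_map_map hΘmeas.aemeasurable hYmeas.aemeasurable).mp hindep
  refine (ae_eq_condExp_of_forall_setIntegral_eq hm hΘint (fun s _ _ => hgint.integrableOn)
    (fun s hs _ => ?_) ?_).symm
  · obtain ⟨A, hA, rfl⟩ := hs
    have hind : Measurable (A.indicator (fun _ => (1:ℝ))) := measurable_const.indicator hA
    have hsum : Measurable (fun p : ℝ × ℝ => p.1 + p.2) := measurable_fst.add measurable_snd
    have hφR : Measurable (fun z : ℝ => z + σ^2/(σ^2+τ^2)*(μ - z)) := by fun_prop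
    have hpair : AEMeasurable (fun ω => (Θ ω, Y ω)) ℙ := (hΘmeas.prodMk hYmeas).aemeasurable
    have hθside : ∫ ω in X ⁻¹' A, Θ ω ∂ℙ
        = ∫ p : ℝ × ℝ, A.indicator (fun _ => (1:ℝ)) (p.1 + p.2) * p.1
          ∂((gaussianReal μ ((τ^2).toNNReal)).prod (gaussianReal 0 ((σ^2).toNNReal))) := by
      have hFm : Measurable (fun p : ℝ × ℝ => A.indicator (fun _ => (1:ℝ)) (p.1 + p.2) * p.1) :=
        (hind.comp hsum).mul measurable_fst
      rw [← hjoint, integral_map hpair hFm.aestronglyMeasurable,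
        ← integral_indicator (hXmeas hA)]
      congr 1
      funext ω
      by_cases h : X ω ∈ A
      · have h' : Θ ω + Y ω ∈ A := by rw [hX] at h; exact h
        simp [Set.indicator_of_mem, h, h']
      · have h' : Θ ω + Y ω ∉ A := by rw [hX] at h; exact h
        simp [Set.indicator_of_notMem, h, h']
    have hgside : ∫ ω in X ⁻¹' A, (X ω + σ^2/(σ^2+τ^2) * (μ - X ω)) ∂ℙ
        = ∫ p : ℝ × ℝ, A.indicator (fun _ => (1:ℝ)) (p.1 + p.2) *
            ((p.1 + p.2) + σ^2/(σ^2+τ^2)*(μ - (p.1 + p.2)))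
          ∂((gaussianReal μ ((τ^2).toNNReal)).prod (gaussianReal 0 ((σ^2).toNNReal))) := by
      have hFm : Measurable (fun p : ℝ × ℝ => A.indicator (fun _ => (1:ℝ)) (p.1 + p.2) *
          ((p.1 + p.2) + σ^2/(σ^2+τ^2)*(μ - (p.1 + p.2)))) :=
        (hind.comp hsum).mul (hφR.comp hsum)
      rw [← hjoint, integral_map hpair hFm.aestronglyMeasurable,
        ← integral_indicator (hXmeas hA)]
      congr 1
      funext ω
      by_cases h : X ω ∈ A
      · have h' : Θ ω + Y ω ∈ A := by rw [hX] at h; exact h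
        have hXω : X ω = Θ ω + Y ω := by rw [hX]
        simp [Set.indicator_of_mem, h, h', hXω]
      · have h' : Θ ω + Y ω ∉ A := by rw [hX] at h; exact h
        simp [Set.indicator_of_notMem, h, h']
    rw [hθside, hgside, BayesGaussAux.lhs_val μ hσ hτ A hA, BayesGaussAux.rhs_val μ hσ hτ A hA]
  · have hXm' : Measurable[MeasurableSpace.comap X (inferInstance : MeasurableSpace ℝ)] X :=
      measurable_iff_comap_le.mpr le_rfl
    have hφR : Measurable (fun z : ℝ => z + σ^2/(σ^2+τ^2)*(μ - z)) := by fun_prop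
    exact StronglyMeasurable.aestronglyMeasurable (hφR.comp hXm').stronglyMeasurable
end

section
/- Let Θ be a random vector in ℝ^d whose law has density h with respect to Lebesgue measure, and let Y be an independent ℝ^d-valued random vector whose law also has a Lebesgue density. Set X = Θ + Y. Assume that Θ and Y are integrable, and that for Lebesgue-almost every x the quantities E[h(x − Y)] ∈ (0, ∞) and E[‖Y‖ h(x − Y)] < ∞. Then, almost surely, E[Θ | X] = g(X), where g(x) = x − E[Y h(x − Y)] / E[h(x − Y)] (the quotient taken componentwise in the numerator, with the scalar denominator E[h(x − Y)]). -/
open MeasureTheory ProbabilityTheory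
open scoped ENNReal NNReal

/-- **Bayesian premium in a general random shift model.**
If `Θ` has Lebesgue density `h`, `Y` is independent of `Θ` with a Lebesgue density,
`X = Θ + Y`, `Θ` and `Y` are integrable, and for a.e. `x` we have
`E[h(x − Y)] ∈ (0, ∞)` and `E[‖Y‖ h(x − Y)] < ∞`, then almost surely
`E[Θ | X] = g(X)` where `g(x) = x − E[Y h(x − Y)] / E[h(x − Y)]` (componentwise). -/
theorem bayes_premium_random_shift
    {Ω : Type*} [MeasureSpace Ω] [IsProbabilityMeasure (ℙ : Measure Ω)] {d : ℕ}
    (Θ Y : Ω → (Fin d → ℝ)) (hΘmeas : Measurable Θ) (hYmeas : Measurable Y)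
    (hindep : IndepFun Θ Y ℙ)
    (h : (Fin d → ℝ) → ℝ) (hh_meas : Measurable h) (hh_nonneg : ∀ x, 0 ≤ h x)
    (hΘ : Measure.map Θ ℙ = volume.withDensity fun x => ENNReal.ofReal (h x))
    (hY_ac : Measure.map Y ℙ ≪ volume)
    (hΘ_int : Integrable Θ ℙ) (hY_int : Integrable Y ℙ)
    (hden : ∀ᵐ x ∂(volume : Measure (Fin d → ℝ)),
      Integrable (fun ω => h (x - Y ω)) ℙ ∧ 0 < ∫ ω, h (x - Y ω) ∂ℙ ∧
        Integrable (fun ω => ‖Y ω‖ * h (x - Y ω)) ℙ)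
    (X : Ω → (Fin d → ℝ)) (hX : X = fun ω => Θ ω + Y ω)
    (g : (Fin d → ℝ) → (Fin d → ℝ))
    (hg : g = fun x i =>
      x i - (∫ ω, Y ω i * h (x - Y ω) ∂ℙ) / (∫ ω, h (x - Y ω) ∂ℙ)) :
    ∀ i : Fin d,
      (ℙ : Measure Ω)[fun ω => Θ ω i |
          MeasurableSpace.comap X (inferInstance : MeasurableSpace (Fin d → ℝ))] =ᵐ[ℙ]
        fun ω => g (X ω) i := by
  classical
  intro i
  have hXmeas : Measurable X := by rw [hX]; exact hΘmeas.add hYmeas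
  have hpair : Measurable fun ω => (X ω, Y ω) := hXmeas.prodMk hYmeas
  set μ : Measure (Fin d → ℝ) := Measure.map Y ℙ with hμdef
  haveI : IsProbabilityMeasure μ := Measure.isProbabilityMeasure_map hYmeas.aemeasurable
  haveI : IsProbabilityMeasure (Measure.map Θ ℙ) :=
    Measure.isProbabilityMeasure_map hΘmeas.aemeasurable
  have hsub : Measurable fun z : (Fin d → ℝ) × (Fin d → ℝ) => z.1 - z.2 :=
    measurable_fst.sub measurable_snd
  have hdmeas : Measurable fun z : (Fin d → ℝ) × (Fin d → ℝ) => h (z.1 - z.2) :=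
    hh_meas.comp hsub
  have hDmeas : Measurable fun z : (Fin d → ℝ) × (Fin d → ℝ) => ENNReal.ofReal (h (z.1 - z.2)) :=
    hdmeas.ennreal_ofReal
  have hHmeas : Measurable fun x : Fin d → ℝ => ENNReal.ofReal (h x) := hh_meas.ennreal_ofReal
  have hH1 : (∫⁻ x, ENNReal.ofReal (h x)) = 1 := by
    have h1 : (volume.withDensity fun x => ENNReal.ofReal (h x)) Set.univ = 1 := by
      rw [← hΘ]; exact measure_univ
    rwa [withDensity_apply _ MeasurableSet.univ, setLIntegral_univ] at h1
  have hhx : ∀ x : Fin d → ℝ, Measurable fun y => h (x - y) := fun x =>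
    hh_meas.comp (measurable_const.sub measurable_id)
  -- μ-representations of the integrals appearing in g
  have hpμ : ∀ x, (∫ y, h (x - y) ∂μ) = ∫ ω, h (x - Y ω) ∂ℙ := fun x =>
    integral_map hYmeas.aemeasurable (hhx x).aestronglyMeasurable
  have hqμ : ∀ x, (∫ y, y i * h (x - y) ∂μ) = ∫ ω, Y ω i * h (x - Y ω) ∂ℙ := fun x =>
    integral_map hYmeas.aemeasurable
      (((measurable_pi_apply i).mul (hhx x)).aestronglyMeasurable)
  have hgi : ∀ x, g x i
      = x i - (∫ y, y i * h (x - y) ∂μ) / (∫ y, h (x - y) ∂μ) := by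
    intro x; rw [hg, hpμ, hqμ]
  -- measurability in the parameter x
  have hpmeas : Measurable fun x => ∫ y, h (x - y) ∂μ :=
    (StronglyMeasurable.integral_prod_right'
      hdmeas.stronglyMeasurable).measurable
  have hqmeas : Measurable fun x => ∫ y, y i * h (x - y) ∂μ :=
    (StronglyMeasurable.integral_prod_right'
      (((measurable_pi_apply i).comp measurable_snd).mul
        hdmeas).stronglyMeasurable).measurable
  have hgimeas : Measurable fun x => g x i := by
    have he : (fun x => g x i) = fun x =>
        x i - (∫ y, y i * h (x - y) ∂μ) / (∫ y, h (x - y) ∂μ) := funext hgi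
    rw [he]
    exact (measurable_pi_apply i).sub (hqmeas.div hpmeas)
  -- transfer of the a.e. hypotheses to μ
  have hdenμ : ∀ᵐ x ∂(volume : Measure (Fin d → ℝ)),
      Integrable (fun y => h (x - y)) μ ∧ (0 < ∫ y, h (x - y) ∂μ) ∧
        Integrable (fun y => ‖y‖ * h (x - y)) μ := by
    filter_upwards [hden] with x hx
    obtain ⟨h1, h2, h3⟩ := hx
    refine ⟨?_, ?_, ?_⟩
    · exact (integrable_map_measure (hhx x).aestronglyMeasurable hYmeas.aemeasurable).mpr h1
    · rw [hpμ x]; exact h2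
    · exact (integrable_map_measure (measurable_norm.mul (hhx x)).aestronglyMeasurable
        hYmeas.aemeasurable).mpr h3
  have hp_nonneg : ∀ x, 0 ≤ ∫ y, h (x - y) ∂μ := fun x =>
    integral_nonneg fun y => hh_nonneg _
  -- componentwise integrability
  have hΘi : Integrable (fun ω => Θ ω i) ℙ :=
    hΘ_int.norm.mono' ((measurable_pi_apply i).comp hΘmeas).aestronglyMeasurable
      (Filter.Eventually.of_forall fun ω => by simpa using norm_le_pi_norm (Θ ω) i)
  have hXint : Integrable X ℙ := by rw [hX]; exact hΘ_int.add hY_int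
  have hXi : Integrable (fun ω => X ω i) ℙ :=
    hXint.norm.mono' ((measurable_pi_apply i).comp hXmeas).aestronglyMeasurable
      (Filter.Eventually.of_forall fun ω => by simpa using norm_le_pi_norm (X ω) i)
  -- the joint law of (X, Y)
  set κ : Measure ((Fin d → ℝ) × (Fin d → ℝ)) := Measure.map (fun ω => (X ω, Y ω)) ℙ
    with hκdef
  have hκ_eq : κ = (volume.prod μ).withDensity fun z => ENNReal.ofReal (h (z.1 - z.2)) := by
    have hmap2 : Measure.map (fun ω => (Θ ω, Y ω)) ℙ = (Measure.map Θ ℙ).prod μ :=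
      (indepFun_iff_map_prod_eq_prod_map_map hΘmeas.aemeasurable hYmeas.aemeasurable).mp hindep
    have hT : Measurable fun z : (Fin d → ℝ) × (Fin d → ℝ) => (z.1 + z.2, z.2) :=
      (measurable_fst.add measurable_snd).prodMk measurable_snd
    have hκT : κ = Measure.map (fun z : (Fin d → ℝ) × (Fin d → ℝ) => (z.1 + z.2, z.2))
        ((Measure.map Θ ℙ).prod μ) := by
      rw [← hmap2, Measure.map_map hT (hΘmeas.prodMk hYmeas), hκdef]
      congr 1
      funext ω
      simp [hX, Function.comp]
    ext s hs
    have hind_meas : Measurable fun z : (Fin d → ℝ) × (Fin d → ℝ) =>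
        s.indicator (fun _ => (1 : ℝ≥0∞)) (z.1 + z.2, z.2) :=
      (measurable_const.indicator hs).comp hT
    have hDind_meas : Measurable fun z : (Fin d → ℝ) × (Fin d → ℝ) =>
        ENNReal.ofReal (h (z.1 - z.2)) * s.indicator (fun _ => (1 : ℝ≥0∞)) z :=
      hDmeas.mul (measurable_const.indicator hs)
    rw [hκT, Measure.map_apply hT hs, withDensity_apply _ hs]
    calc ((Measure.map Θ ℙ).prod μ) ((fun z : (Fin d → ℝ) × (Fin d → ℝ) =>
            (z.1 + z.2, z.2)) ⁻¹' s)
        = ∫⁻ z, s.indicator (fun _ => (1 : ℝ≥0∞)) (z.1 + z.2, z.2)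
            ∂((Measure.map Θ ℙ).prod μ) := by
          rw [← lintegral_indicator_one (hT hs)]
          refine lintegral_congr fun z => ?_
          simp [Set.indicator_apply, Set.mem_preimage]
      _ = ∫⁻ θ, ∫⁻ y, s.indicator (fun _ => (1 : ℝ≥0∞)) (θ + y, y) ∂μ ∂(Measure.map Θ ℙ) :=
          lintegral_prod _ hind_meas.aemeasurable
      _ = ∫⁻ y, ∫⁻ θ, s.indicator (fun _ => (1 : ℝ≥0∞)) (θ + y, y) ∂(Measure.map Θ ℙ) ∂μ :=
          lintegral_lintegral_swap hind_meas.aemeasurable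
      _ = ∫⁻ y, ∫⁻ x, ENNReal.ofReal (h (x - y)) * s.indicator (fun _ => (1 : ℝ≥0∞)) (x, y)
            ∂volume ∂μ := by
          refine lintegral_congr fun y => ?_
          rw [hΘ, lintegral_withDensity_eq_lintegral_mul _ hHmeas
            (show Measurable fun θ : Fin d → ℝ =>
                s.indicator (fun _ => (1 : ℝ≥0∞)) (θ + y, y) from
              (measurable_const.indicator hs).comp
                ((measurable_id.add measurable_const).prodMk measurable_const))]
          rw [← lintegral_add_right_eq_self
            (fun x => ENNReal.ofReal (h (x - y)) * s.indicator (fun _ => (1 : ℝ≥0∞)) (x, y)) y]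
          refine lintegral_congr fun θ => ?_
          simp [add_sub_cancel_right]
      _ = ∫⁻ x, ∫⁻ y, ENNReal.ofReal (h (x - y)) * s.indicator (fun _ => (1 : ℝ≥0∞)) (x, y)
            ∂μ ∂volume := (lintegral_lintegral_swap hDind_meas.aemeasurable).symm
      _ = ∫⁻ z in s, ENNReal.ofReal (h (z.1 - z.2)) ∂(volume.prod μ) := by
          rw [← lintegral_indicator hs, lintegral_prod _
            (hDmeas.indicator hs).aemeasurable]
          refine lintegral_congr fun x => lintegral_congr fun y => ?_
          by_cases hz : (x, y) ∈ s <;> simp [Set.indicator_apply, hz]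
  -- the law of X
  have hXmap : Measure.map X ℙ = Measure.map Prod.fst κ := by
    rw [hκdef, Measure.map_map measurable_fst hpair]
    rfl
  have hXlaw0 : Measure.map X ℙ
      = volume.withDensity fun x => ∫⁻ y, ENNReal.ofReal (h (x - y)) ∂μ := by
    rw [hXmap, hκ_eq]
    ext A hA
    rw [Measure.map_apply measurable_fst hA,
      withDensity_apply _ (hA.preimage measurable_fst), withDensity_apply _ hA,
      ← Set.prod_univ, ← Measure.prod_restrict, Measure.restrict_univ,
      lintegral_prod _ hDmeas.aemeasurable]
  have hXlaw : Measure.map X ℙ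
      = volume.withDensity fun x => ENNReal.ofReal (∫ y, h (x - y) ∂μ) := by
    rw [hXlaw0]
    refine withDensity_congr_ae ?_
    filter_upwards [hdenμ] with x hx
    exact (ofReal_integral_eq_lintegral_ofReal hx.1
      (Filter.Eventually.of_forall fun y => hh_nonneg _)).symm
  -- integrability of q := fun x => ∫ y, y i * h (x - y) ∂μ
  have hQmeas : Measurable fun x => ∫ y, |y i| * h (x - y) ∂μ :=
    (StronglyMeasurable.integral_prod_right'
      (((measurable_pi_apply i).comp measurable_snd).abs.mul
        hdmeas).stronglyMeasurable).measurable
  have hQabs_int : ∀ᵐ x ∂(volume : Measure (Fin d → ℝ)),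
      Integrable (fun y => |y i| * h (x - y)) μ := by
    filter_upwards [hdenμ] with x hx
    refine hx.2.2.mono' (((measurable_pi_apply i).abs.mul (hhx x)).aestronglyMeasurable)
      (Filter.Eventually.of_forall fun y => ?_)
    have h1 : |y i| ≤ ‖y‖ := by simpa using norm_le_pi_norm y i
    have : 0 ≤ |y i| * h (x - y) := mul_nonneg (abs_nonneg _) (hh_nonneg _)
    rw [Real.norm_eq_abs, abs_of_nonneg this]
    exact mul_le_mul_of_nonneg_right h1 (hh_nonneg _)
  have hQint : Integrable (fun x => ∫ y, |y i| * h (x - y) ∂μ) volume := by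
    refine ⟨hQmeas.aestronglyMeasurable, ?_⟩
    rw [hasFiniteIntegral_iff_norm]
    have hcong : ∀ᵐ x ∂(volume : Measure (Fin d → ℝ)),
        ENNReal.ofReal ‖∫ y, |y i| * h (x - y) ∂μ‖
          = ∫⁻ y, ENNReal.ofReal (|y i|) * ENNReal.ofReal (h (x - y)) ∂μ := by
      filter_upwards [hQabs_int] with x hx
      rw [Real.norm_eq_abs, abs_of_nonneg
        (integral_nonneg fun y => mul_nonneg (abs_nonneg _) (hh_nonneg _))]
      rw [ofReal_integral_eq_lintegral_ofReal hx
        (Filter.Eventually.of_forall fun y => mul_nonneg (abs_nonneg _) (hh_nonneg _))]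
      refine lintegral_congr fun y => ?_
      rw [ENNReal.ofReal_mul (abs_nonneg _)]
    rw [lintegral_congr_ae hcong]
    have hmeas2 : Measurable fun z : (Fin d → ℝ) × (Fin d → ℝ) =>
        ENNReal.ofReal (|z.2 i|) * ENNReal.ofReal (h (z.1 - z.2)) :=
      (((measurable_pi_apply i).comp measurable_snd).abs.ennreal_ofReal).mul
        hDmeas
    rw [lintegral_lintegral_swap hmeas2.aemeasurable]
    have hinner : ∀ y : Fin d → ℝ,
        (∫⁻ x, ENNReal.ofReal (|y i|) * ENNReal.ofReal (h (x - y)) ∂volume)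
          = ENNReal.ofReal (|y i|) := by
      intro y
      rw [lintegral_const_mul _
        (show Measurable fun x : Fin d → ℝ => ENNReal.ofReal (h (x - y)) from
          (hh_meas.comp (measurable_id.sub measurable_const)).ennreal_ofReal)]
      rw [lintegral_sub_right_eq_self (fun x => ENNReal.ofReal (h x)) y, hH1, mul_one]
    rw [lintegral_congr hinner]
    have hle : (∫⁻ y, ENNReal.ofReal (|y i|) ∂μ) ≤ ∫⁻ y, ‖y‖₊ ∂μ := by
      refine lintegral_mono fun y => ?_
      rw [← enorm_eq_nnnorm, ← ofReal_norm]
      exact ENNReal.ofReal_le_ofReal (by simpa using norm_le_pi_norm y i)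
    refine lt_of_le_of_lt hle ?_
    rw [hμdef, lintegral_map measurable_nnnorm.coe_nnreal_ennreal hYmeas]
    exact hY_int.2
  have hq_le : ∀ x, |∫ y, y i * h (x - y) ∂μ| ≤ ∫ y, |y i| * h (x - y) ∂μ := by
    intro x
    rw [← Real.norm_eq_abs]
    have h1 : ‖∫ y, y i * h (x - y) ∂μ‖ ≤ ∫ y, ‖y i * h (x - y)‖ ∂μ :=
      norm_integral_le_integral_norm _
    refine h1.trans (le_of_eq (integral_congr_ae (Filter.Eventually.of_forall fun y => ?_)))
    show ‖y i * h (x - y)‖ = |y i| * h (x - y)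
    rw [Real.norm_eq_abs, abs_mul, abs_of_nonneg (hh_nonneg _)]
  have hqint : Integrable (fun x => ∫ y, y i * h (x - y) ∂μ) volume :=
    hQint.mono' hqmeas.aestronglyMeasurable
      (Filter.Eventually.of_forall fun x => by rw [Real.norm_eq_abs]; exact hq_le x)
  have htoReal : ∀ x, (ENNReal.ofReal (∫ y, h (x - y) ∂μ)).toReal = ∫ y, h (x - y) ∂μ :=
    fun x => ENNReal.toReal_ofReal (hp_nonneg x)
  have hhtoReal : ∀ z : (Fin d → ℝ) × (Fin d → ℝ),
      (ENNReal.ofReal (h (z.1 - z.2))).toReal = h (z.1 - z.2) :=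
    fun z => ENNReal.toReal_ofReal (hh_nonneg _)
  -- integrability of x i * p x
  have hxp_int : Integrable (fun x => x i * ∫ y, h (x - y) ∂μ) volume := by
    have h1 : Integrable (fun x => x i) (Measure.map X ℙ) :=
      (integrable_map_measure (measurable_pi_apply i).aestronglyMeasurable
        hXmeas.aemeasurable).mpr hXi
    rw [hXlaw, integrable_withDensity_iff (hpmeas.ennreal_ofReal)
      (Filter.Eventually.of_forall fun x => ENNReal.ofReal_lt_top)] at h1
    refine h1.congr (Filter.Eventually.of_forall fun x => ?_)
    simp only [htoReal]
  -- integrability of g · i with respect to the law of X, and of g (X ·) i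
  have hgp_int : Integrable (fun x => g x i * ∫ y, h (x - y) ∂μ) volume := by
    refine (hxp_int.sub hqint).congr ?_
    filter_upwards [hdenμ] with x hx
    rw [hgi x, sub_mul, div_mul_cancel₀ _ (ne_of_gt hx.2.1)]
    simp [Pi.sub_apply]
  have hgX_law : Integrable (fun x => g x i) (Measure.map X ℙ) := by
    rw [hXlaw, integrable_withDensity_iff (hpmeas.ennreal_ofReal)
      (Filter.Eventually.of_forall fun x => ENNReal.ofReal_lt_top)]
    refine hgp_int.congr (Filter.Eventually.of_forall fun x => ?_)
    simp only [htoReal]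
  have hGint : Integrable (fun ω => g (X ω) i) ℙ :=
    (integrable_map_measure hgimeas.aestronglyMeasurable hXmeas.aemeasurable).mp hgX_law
  -- the key change-of-variables identity
  have keyF : ∀ F : (Fin d → ℝ) × (Fin d → ℝ) → ℝ, Measurable F →
      Integrable (fun ω => F (X ω, Y ω)) ℙ →
      (∫ ω, F (X ω, Y ω) ∂ℙ) = ∫ x, ∫ y, h (x - y) * F (x, y) ∂μ ∂volume := by
    intro F hF hFint
    have hFκ : Integrable F κ :=
      (integrable_map_measure hF.aestronglyMeasurable hpair.aemeasurable).mpr hFint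
    have h1 : (∫ ω, F (X ω, Y ω) ∂ℙ) = ∫ z, F z ∂κ :=
      (integral_map hpair.aemeasurable hF.aestronglyMeasurable).symm
    have h2 : (∫ z, F z ∂κ) = ∫ z, h (z.1 - z.2) * F z ∂(volume.prod μ) := by
      rw [hκ_eq]
      have he : ((volume.prod μ).withDensity fun z => ENNReal.ofReal (h (z.1 - z.2)))
          = (volume.prod μ).withDensity fun z => ((h (z.1 - z.2)).toNNReal : ℝ≥0∞) := rfl
      rw [he, integral_withDensity_eq_integral_smul hdmeas.real_toNNReal]
      refine integral_congr_ae (Filter.Eventually.of_forall fun z => ?_)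
      show (h (z.1 - z.2)).toNNReal • F z = h (z.1 - z.2) * F z
      rw [NNReal.smul_def, Real.coe_toNNReal _ (hh_nonneg _), smul_eq_mul]
    have hFint2 : Integrable (fun z => h (z.1 - z.2) * F z) (volume.prod μ) := by
      rw [hκ_eq, integrable_withDensity_iff hDmeas
        (Filter.Eventually.of_forall fun z => ENNReal.ofReal_lt_top)] at hFκ
      refine hFκ.congr (Filter.Eventually.of_forall fun z => ?_)
      simp only [hhtoReal]
      ring
    rw [h1, h2, integral_prod _ hFint2]
  -- conclusion via the characterization of conditional expectation
  have hm : MeasurableSpace.comap X (inferInstance : MeasurableSpace (Fin d → ℝ))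
      ≤ (inferInstance : MeasurableSpace Ω) := hXmeas.comap_le
  refine (ae_eq_condExp_of_forall_setIntegral_eq hm hΘi ?_ ?_ ?_).symm
  · intro s hs _
    exact hGint.integrableOn
  · intro s hs _
    obtain ⟨A, hA, rfl⟩ := hs
    -- F1 and F2
    set F1 : (Fin d → ℝ) × (Fin d → ℝ) → ℝ :=
      fun z => A.indicator (fun _ => (1 : ℝ)) z.1 * (z.1 i - z.2 i) with hF1def
    set F2 : (Fin d → ℝ) × (Fin d → ℝ) → ℝ :=
      fun z => A.indicator (fun _ => (1 : ℝ)) z.1 * g z.1 i with hF2def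
    have hF1meas : Measurable F1 :=
      ((measurable_const.indicator hA).comp measurable_fst).mul
        (((measurable_pi_apply i).comp measurable_fst).sub
          ((measurable_pi_apply i).comp measurable_snd))
    have hF2meas : Measurable F2 :=
      ((measurable_const.indicator hA).comp measurable_fst).mul
        (hgimeas.comp measurable_fst)
    have hcomp1 : ∀ ω, F1 (X ω, Y ω) = (X ⁻¹' A).indicator (fun ω => Θ ω i) ω := by
      intro ω
      simp only [hF1def, Set.indicator_apply, Set.mem_preimage]
      by_cases hω : X ω ∈ A
      · simp only [if_pos hω, one_mul, hX]
        simp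
      · simp [if_neg hω]
    have hcomp2 : ∀ ω, F2 (X ω, Y ω) = (X ⁻¹' A).indicator (fun ω => g (X ω) i) ω := by
      intro ω
      simp only [hF2def, Set.indicator_apply, Set.mem_preimage]
      by_cases hω : X ω ∈ A <;> simp [hω]
    have hF1int : Integrable (fun ω => F1 (X ω, Y ω)) ℙ := by
      refine (hΘi.indicator (hXmeas hA)).congr ?_
      exact Filter.Eventually.of_forall fun ω => (hcomp1 ω).symm
    have hF2int : Integrable (fun ω => F2 (X ω, Y ω)) ℙ := by
      refine (hGint.indicator (hXmeas hA)).congr ?_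
      exact Filter.Eventually.of_forall fun ω => (hcomp2 ω).symm
    have E1 : (∫ ω in X ⁻¹' A, Θ ω i ∂ℙ)
        = ∫ x, A.indicator (fun _ => (1 : ℝ)) x *
            ((x i * ∫ y, h (x - y) ∂μ) - ∫ y, y i * h (x - y) ∂μ) ∂volume := by
      rw [← integral_indicator (hXmeas hA)]
      rw [show ((X ⁻¹' A).indicator fun ω => Θ ω i) = fun ω => F1 (X ω, Y ω) from
        funext fun ω => (hcomp1 ω).symm]
      rw [keyF F1 hF1meas hF1int]
      refine integral_congr_ae ?_
      filter_upwards [hdenμ] with x hx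
      have hint1 : Integrable (fun y => x i * h (x - y)) μ := hx.1.const_mul _
      have hint2 : Integrable (fun y => y i * h (x - y)) μ := by
        refine hx.2.2.mono' (((measurable_pi_apply i).mul (hhx x)).aestronglyMeasurable)
          (Filter.Eventually.of_forall fun y => ?_)
        rw [Real.norm_eq_abs, abs_mul, abs_of_nonneg (hh_nonneg _)]
        exact mul_le_mul_of_nonneg_right (by simpa using norm_le_pi_norm y i) (hh_nonneg _)
      calc (∫ y, h (x - y) * F1 (x, y) ∂μ)
          = ∫ y, A.indicator (fun _ => (1 : ℝ)) x *
              (x i * h (x - y) - y i * h (x - y)) ∂μ := by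
            refine integral_congr_ae (Filter.Eventually.of_forall fun y => ?_)
            simp only [hF1def]
            ring
        _ = A.indicator (fun _ => (1 : ℝ)) x *
              ∫ y, (x i * h (x - y) - y i * h (x - y)) ∂μ := integral_const_mul _ _
        _ = A.indicator (fun _ => (1 : ℝ)) x *
              ((x i * ∫ y, h (x - y) ∂μ) - ∫ y, y i * h (x - y) ∂μ) := by
            rw [integral_sub hint1 hint2, integral_const_mul]
    have E2 : (∫ ω in X ⁻¹' A, g (X ω) i ∂ℙ)
        = ∫ x, (∫ y, h (x - y) ∂μ) * (A.indicator (fun _ => (1 : ℝ)) x * g x i) ∂volume := by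
      rw [← integral_indicator (hXmeas hA)]
      rw [show ((X ⁻¹' A).indicator fun ω => g (X ω) i) = fun ω => F2 (X ω, Y ω) from
        funext fun ω => (hcomp2 ω).symm]
      rw [keyF F2 hF2meas hF2int]
      refine integral_congr_ae (Filter.Eventually.of_forall fun x => ?_)
      simp only [hF2def]
      rw [show (∫ y, h (x - y) * (A.indicator (fun _ => (1 : ℝ)) x * g x i) ∂μ)
          = (∫ y, h (x - y) ∂μ) * (A.indicator (fun _ => (1 : ℝ)) x * g x i) from
        integral_mul_const _ _]
    rw [E2, E1]
    refine integral_congr_ae ?_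
    filter_upwards [hdenμ] with x hx
    have hpne : (∫ y, h (x - y) ∂μ) ≠ 0 := ne_of_gt hx.2.1
    rw [hgi x]
    field_simp
  · exact StronglyMeasurable.aestronglyMeasurable
      ((hgimeas.comp (Measurable.of_comap_le le_rfl)).stronglyMeasurable)
end

section
/- Let Θ be a random vector in ℝ^d whose law has density h with respect to Lebesgue measure, and let Y be an independent ℝ^d-valued random vector whose law has a Lebesgue density and which is symmetric, i.e., Y and −Y have the same distribution. Set X = Θ + Y. Assume Θ and Y are integrable and that for Lebesgue-almost every x the quantities E[h(x + Y)] ∈ (0, ∞) and E[‖Y‖ h(x + Y)] < ∞. Then, almost surely, E[Θ | X] = g(X), where g(x) = x + E[Y h(x + Y)] / E[h(x + Y)]. -/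
open MeasureTheory ProbabilityTheory
open scoped ENNReal NNReal

/-- **Bayesian premium in a random shift model with symmetric shift.**
If `Θ` has Lebesgue density `h`, `Y` is independent of `Θ`, has a Lebesgue density and is
symmetric (`Y =ᵈ −Y`), `X = Θ + Y`, `Θ` and `Y` are integrable, and for a.e. `x` we have
`E[h(x + Y)] ∈ (0, ∞)` and `E[‖Y‖ h(x + Y)] < ∞`, then almost surely
`E[Θ | X] = g(X)` where `g(x) = x + E[Y h(x + Y)] / E[h(x + Y)]` (componentwise). -/
theorem bayes_premium_random_shift_symmetric
    {Ω : Type*} [MeasureSpace Ω] [IsProbabilityMeasure (ℙ : Measure Ω)] {d : ℕ}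
    (Θ Y : Ω → (Fin d → ℝ)) (hΘmeas : Measurable Θ) (hYmeas : Measurable Y)
    (hindep : IndepFun Θ Y ℙ)
    (h : (Fin d → ℝ) → ℝ) (hh_meas : Measurable h) (hh_nonneg : ∀ x, 0 ≤ h x)
    (hΘ : Measure.map Θ ℙ = volume.withDensity fun x => ENNReal.ofReal (h x))
    (hY_ac : Measure.map Y ℙ ≪ volume)
    (hY_symm : Measure.map Y ℙ = Measure.map (fun ω => -Y ω) ℙ)
    (hΘ_int : Integrable Θ ℙ) (hY_int : Integrable Y ℙ)
    (hden : ∀ᵐ x ∂(volume : Measure (Fin d → ℝ)),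
      Integrable (fun ω => h (x + Y ω)) ℙ ∧ 0 < ∫ ω, h (x + Y ω) ∂ℙ ∧
        Integrable (fun ω => ‖Y ω‖ * h (x + Y ω)) ℙ)
    (X : Ω → (Fin d → ℝ)) (hX : X = fun ω => Θ ω + Y ω)
    (g : (Fin d → ℝ) → (Fin d → ℝ))
    (hg : g = fun x i =>
      x i + (∫ ω, Y ω i * h (x + Y ω) ∂ℙ) / (∫ ω, h (x + Y ω) ∂ℙ)) :
    ∀ i : Fin d,
      (ℙ : Measure Ω)[fun ω => Θ ω i |
          MeasurableSpace.comap X (inferInstance : MeasurableSpace (Fin d → ℝ))] =ᵐ[ℙ]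
        fun ω => g (X ω) i := by
  classical
  intro i
  set μY : Measure (Fin d → ℝ) := Measure.map Y ℙ with hμYdef
  haveI : IsProbabilityMeasure μY := Measure.isProbabilityMeasure_map hYmeas.aemeasurable
  haveI : IsProbabilityMeasure (Measure.map Θ ℙ) := Measure.isProbabilityMeasure_map hΘmeas.aemeasurable
  have hXmeas : Measurable X := by rw [hX]; exact hΘmeas.add hYmeas
  -- component integrability
  have hΘi_int : Integrable (fun ω => Θ ω i) ℙ := by
    refine hΘ_int.norm.mono' ((measurable_pi_apply i).comp hΘmeas).aestronglyMeasurable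
      (Filter.Eventually.of_forall fun ω => ?_)
    simpa using norm_le_pi_norm (Θ ω) i
  have hYi_int : Integrable (fun ω => Y ω i) ℙ := by
    refine hY_int.norm.mono' ((measurable_pi_apply i).comp hYmeas).aestronglyMeasurable
      (Filter.Eventually.of_forall fun ω => ?_)
    simpa using norm_le_pi_norm (Y ω) i
  -- symmetry
  have hneg : Measure.map Neg.neg μY = μY := by
    rw [hμYdef, Measure.map_map measurable_neg hYmeas]
    exact (hY_symm.symm : Measure.map (fun ω => -Y ω) ℙ = Measure.map Y ℙ)
  have hint_neg : ∀ (φ : (Fin d → ℝ) → ℝ), Measurable φ →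
      ∫ y, φ (-y) ∂μY = ∫ y, φ y ∂μY := by
    intro φ hφ
    conv_rhs => rw [← hneg]
    rw [integral_map measurable_neg.aemeasurable hφ.aestronglyMeasurable]
  have hlint_neg : ∀ (φ : (Fin d → ℝ) → ℝ≥0∞), Measurable φ →
      ∫⁻ y, φ (-y) ∂μY = ∫⁻ y, φ y ∂μY := by
    intro φ hφ
    conv_rhs => rw [← hneg]
    rw [lintegral_map hφ measurable_neg]
  -- total mass of h
  have hTotal : ∫⁻ x, ENNReal.ofReal (h x) = 1 := by
    have := measure_univ (μ := Measure.map Θ ℙ)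
    rw [hΘ, withDensity_apply _ MeasurableSet.univ, Measure.restrict_univ] at this
    exact this
  -- joint law
  have hjoint : Measure.map (fun ω => (Θ ω, Y ω)) ℙ = (Measure.map Θ ℙ).prod μY :=
    (indepFun_iff_map_prod_eq_prod_map_map hΘmeas.aemeasurable hYmeas.aemeasurable).mp hindep
  -- the densities
  set p : (Fin d → ℝ) → ℝ := fun x => ∫ ω, h (x + Y ω) ∂ℙ with hpdef
  set q : (Fin d → ℝ) → ℝ := fun x => ∫ ω, Y ω i * h (x + Y ω) ∂ℙ with hqdef
  set P : (Fin d → ℝ) → ℝ≥0∞ := fun x => ∫⁻ y, ENNReal.ofReal (h (x + y)) ∂μY with hPdef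
  have hp_meas : Measurable p := by
    have : StronglyMeasurable (Function.uncurry fun (x : Fin d → ℝ) ω => h (x + Y ω)) :=
      (hh_meas.comp (measurable_fst.add (hYmeas.comp measurable_snd))).stronglyMeasurable
    exact this.integral_prod_right'.measurable
  have hq_meas : Measurable q := by
    have : StronglyMeasurable (Function.uncurry fun (x : Fin d → ℝ) ω => Y ω i * h (x + Y ω)) :=
      (((measurable_pi_apply i).comp (hYmeas.comp measurable_snd)).mul
        (hh_meas.comp (measurable_fst.add (hYmeas.comp measurable_snd)))).stronglyMeasurable
    exact this.integral_prod_right'.measurable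
  have hP_meas : Measurable P := by
    have : Measurable (Function.uncurry fun (x y : Fin d → ℝ) => ENNReal.ofReal (h (x + y))) :=
      ENNReal.measurable_ofReal.comp (hh_meas.comp (measurable_fst.add measurable_snd))
    exact this.lintegral_prod_right'
  have hmeas_shift : ∀ x : Fin d → ℝ, Measurable fun y : Fin d → ℝ => h (x + y) :=
    fun x => hh_meas.comp (measurable_const.add measurable_id)
  have hmeas_shift' : ∀ x : Fin d → ℝ, Measurable fun y : Fin d → ℝ => y i * h (x + y) :=
    fun x => (measurable_pi_apply i).mul (hmeas_shift x)
  have hpY : ∀ x, p x = ∫ y, h (x + y) ∂μY := fun x =>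
    (integral_map hYmeas.aemeasurable ((hmeas_shift x).aestronglyMeasurable :
      AEStronglyMeasurable (fun y => h (x + y)) (Measure.map Y ℙ))).symm
  have hqY : ∀ x, q x = ∫ y, y i * h (x + y) ∂μY := fun x =>
    (integral_map hYmeas.aemeasurable ((hmeas_shift' x).aestronglyMeasurable :
      AEStronglyMeasurable (fun y => y i * h (x + y)) (Measure.map Y ℙ))).symm
  -- a.e. facts
  have hae : ∀ᵐ x ∂(volume : Measure (Fin d → ℝ)),
      Integrable (fun y => h (x + y)) μY ∧ 0 < p x ∧
        Integrable (fun y => y i * h (x + y)) μY ∧ P x = ENNReal.ofReal (p x) := by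
    filter_upwards [hden] with x hx
    obtain ⟨h1, h2, h3⟩ := hx
    have hint1 : Integrable (fun y => h (x + y)) μY :=
      (integrable_map_measure ((hmeas_shift x).aestronglyMeasurable :
        AEStronglyMeasurable (fun y => h (x + y)) (Measure.map Y ℙ)) hYmeas.aemeasurable).mpr h1
    have hint3 : Integrable (fun y => ‖y‖ * h (x + y)) μY :=
      (integrable_map_measure ((measurable_norm.mul (hmeas_shift x)).aestronglyMeasurable :
        AEStronglyMeasurable (fun y => ‖y‖ * h (x + y)) (Measure.map Y ℙ)) hYmeas.aemeasurable).mpr h3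
    have hint2 : Integrable (fun y => y i * h (x + y)) μY := by
      refine hint3.mono' (hmeas_shift' x).aestronglyMeasurable
        (Filter.Eventually.of_forall fun y => ?_)
      have h1 : |y i| ≤ ‖y‖ := by simpa using norm_le_pi_norm y i
      have h2 : (0:ℝ) ≤ h (x + y) := hh_nonneg _
      calc ‖y i * h (x + y)‖ = |y i| * h (x+y) := by
            rw [norm_mul, Real.norm_eq_abs, Real.norm_eq_abs, abs_of_nonneg h2]
        _ ≤ ‖y‖ * h (x+y) := by gcongr
    refine ⟨hint1, h2, hint2, ?_⟩
    rw [hpY x]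
    exact (ofReal_integral_eq_lintegral_ofReal hint1
      (Filter.Eventually.of_forall fun y => hh_nonneg _)).symm
  -- law of X
  have hsum_meas : Measurable fun z : (Fin d → ℝ) × (Fin d → ℝ) => z.1 + z.2 :=
    measurable_fst.add measurable_snd
  have hXlaw : Measure.map X ℙ = volume.withDensity P := by
    have hmap2 : Measure.map X ℙ
        = Measure.map (fun z : (Fin d → ℝ) × (Fin d → ℝ) => z.1 + z.2)
          ((Measure.map Θ ℙ).prod μY) := by
      rw [hX, ← hjoint, Measure.map_map hsum_meas (hΘmeas.prodMk hYmeas)]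
      rfl
    rw [hmap2, hΘ]
    ext A hA
    have hpre : MeasurableSet ((fun z : (Fin d → ℝ) × (Fin d → ℝ) => z.1 + z.2) ⁻¹' A) :=
      hsum_meas hA
    rw [Measure.map_apply hsum_meas hA, withDensity_apply _ hA, Measure.prod_apply hpre]
    have hμmeas : Measurable fun θ =>
        μY (Prod.mk θ ⁻¹' ((fun z : (Fin d → ℝ) × (Fin d → ℝ) => z.1 + z.2) ⁻¹' A)) :=
      measurable_measure_prodMk_left hpre
    have hoR : Measurable fun x : Fin d → ℝ => ENNReal.ofReal (h x) := by
      exact ENNReal.measurable_ofReal.comp hh_meas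
    rw [lintegral_withDensity_eq_lintegral_mul _ hoR hμmeas]
    have hind_meas : Measurable (A.indicator (1 : (Fin d → ℝ) → ℝ≥0∞)) :=
      measurable_one.indicator hA
    calc ∫⁻ θ, ((fun x => ENNReal.ofReal (h x)) * fun θ =>
            μY (Prod.mk θ ⁻¹' ((fun z : (Fin d → ℝ) × (Fin d → ℝ) => z.1 + z.2) ⁻¹' A))) θ ∂volume
        = ∫⁻ θ, ∫⁻ y, ENNReal.ofReal (h θ) * A.indicator 1 (θ + y) ∂μY ∂volume := by
          refine lintegral_congr fun θ => ?_
          have hm1 : Measurable fun y : Fin d → ℝ => (A.indicator 1 (θ + y) : ℝ≥0∞) := by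
            exact hind_meas.comp (measurable_const.add measurable_id)
          rw [lintegral_const_mul _ hm1]
          simp only [Pi.mul_apply]
          congr 1
          have : (Prod.mk θ ⁻¹' ((fun z : (Fin d → ℝ) × (Fin d → ℝ) => z.1 + z.2) ⁻¹' A))
              = ((fun y => θ + y) ⁻¹' A) := rfl
          have hsA : MeasurableSet ((fun y : Fin d → ℝ => θ + y) ⁻¹' A) := by
            exact (measurable_const.add measurable_id) hA
          rw [this, ← lintegral_indicator_one hsA]
          exact lintegral_congr fun y => rfl
      _ = ∫⁻ y, ∫⁻ θ, ENNReal.ofReal (h θ) * A.indicator 1 (θ + y) ∂volume ∂μY := by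
          refine lintegral_lintegral_swap (Measurable.aemeasurable ?_)
          exact ((ENNReal.measurable_ofReal.comp (hh_meas.comp measurable_fst)).mul
            (hind_meas.comp (measurable_fst.add measurable_snd)))
      _ = ∫⁻ y, ∫⁻ x, ENNReal.ofReal (h (x - y)) * A.indicator 1 x ∂volume ∂μY := by
          refine lintegral_congr fun y => ?_
          rw [← lintegral_add_right_eq_self
            (fun x => ENNReal.ofReal (h (x - y)) * A.indicator 1 x) y]
          simp [add_sub_cancel_right]
      _ = ∫⁻ x, ∫⁻ y, ENNReal.ofReal (h (x - y)) * A.indicator 1 x ∂μY ∂volume := by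
          refine (lintegral_lintegral_swap (Measurable.aemeasurable ?_)).symm
          have hm3 : Measurable fun z : (Fin d → ℝ) × (Fin d → ℝ) =>
              ENNReal.ofReal (h (z.1 - z.2)) * (A.indicator 1 z.1 : ℝ≥0∞) := by
            exact ((ENNReal.measurable_ofReal.comp
              (hh_meas.comp (measurable_fst.sub measurable_snd))).mul
              (hind_meas.comp measurable_fst))
          simp only [Function.uncurry_def]
          exact hm3
      _ = ∫⁻ x, A.indicator 1 x * P x ∂volume := by
          refine lintegral_congr fun x => ?_
          have hm2 : Measurable fun y : Fin d → ℝ => ENNReal.ofReal (h (x - y)) := by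
            exact ENNReal.measurable_ofReal.comp (hh_meas.comp (measurable_const.sub measurable_id))
          rw [lintegral_mul_const _ hm2]
          rw [mul_comm]
          congr 1
          calc ∫⁻ a, ENNReal.ofReal (h (x - a)) ∂μY
              = ∫⁻ y, ENNReal.ofReal (h (x + -y)) ∂μY :=
                lintegral_congr fun y => by rw [sub_eq_add_neg]
            _ = ∫⁻ y, ENNReal.ofReal (h (x + y)) ∂μY :=
                hlint_neg (fun y => ENNReal.ofReal (h (x + y)))
                  (ENNReal.measurable_ofReal.comp (hh_meas.comp (measurable_const.add measurable_id)))
            _ = P x := (congrFun hPdef x).symm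
      _ = ∫⁻ x in A, P x ∂volume := by
          rw [← lintegral_indicator hA P]
          refine lintegral_congr fun x => ?_
          by_cases hx : x ∈ A <;> simp [Set.indicator_apply, hx]
  -- density transfer for Bochner integrals against μΘ
  have hhnn_meas : Measurable fun x => (h x).toNNReal := hh_meas.real_toNNReal
  have hμΘ_eq : Measure.map Θ ℙ = volume.withDensity fun x => ((h x).toNNReal : ℝ≥0∞) := by
    rw [hΘ]; rfl
  have hwd : ∀ f : (Fin d → ℝ) → ℝ,
      ∫ θ, f θ ∂(Measure.map Θ ℙ) = ∫ θ, h θ * f θ ∂volume := by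
    intro f
    rw [hμΘ_eq, integral_withDensity_eq_integral_smul hhnn_meas f]
    refine integral_congr_ae (Filter.Eventually.of_forall fun θ => ?_)
    simp [NNReal.smul_def, Real.coe_toNNReal _ (hh_nonneg θ)]
  have hΘcomp_int : Integrable (fun θ => θ i) (Measure.map Θ ℙ) :=
    (integrable_map_measure ((measurable_pi_apply i).aestronglyMeasurable :
      AEStronglyMeasurable (fun θ => θ i) (Measure.map Θ ℙ)) hΘmeas.aemeasurable).mpr hΘi_int
  have hθh_int : Integrable (fun θ => θ i * h θ) volume := by
    have h1 : Integrable (fun θ => (h θ).toNNReal • θ i) volume := by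
      rw [← integrable_withDensity_iff_integrable_smul hhnn_meas, ← hμΘ_eq]
      exact hΘcomp_int
    refine h1.congr (Filter.Eventually.of_forall fun θ => ?_)
    simp [NNReal.smul_def, Real.coe_toNNReal _ (hh_nonneg θ), mul_comm]
  -- the right-hand side identity
  have hRHS : ∀ A : Set (Fin d → ℝ), MeasurableSet A →
      ∫ ω in (X ⁻¹' A), Θ ω i ∂ℙ
        = ∫ x in A, (∫ y, (x - y) i * h (x - y) ∂μY) ∂volume := by
    intro A hA
    set G : (Fin d → ℝ) × (Fin d → ℝ) → ℝ := fun z => if z.1 + z.2 ∈ A then z.1 i else 0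
      with hGdef
    have hGmeas : Measurable G :=
      Measurable.ite (hsum_meas hA) ((measurable_pi_apply i).comp measurable_fst)
        measurable_const
    have hfst_int : Integrable (fun z : (Fin d → ℝ) × (Fin d → ℝ) => z.1 i)
        ((Measure.map Θ ℙ).prod μY) := by
      have hmapfst : Measure.map Prod.fst ((Measure.map Θ ℙ).prod μY) = Measure.map Θ ℙ := by
        rw [Measure.map_fst_prod]; simp
      have := (integrable_map_measure ((measurable_pi_apply i).aestronglyMeasurable :
        AEStronglyMeasurable (fun θ => θ i) (Measure.map Prod.fst ((Measure.map Θ ℙ).prod μY)))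
        measurable_fst.aemeasurable).mp (by rw [hmapfst]; exact hΘcomp_int)
      exact this
    have hGint : Integrable G ((Measure.map Θ ℙ).prod μY) := by
      refine hfst_int.norm.mono' hGmeas.aestronglyMeasurable
        (Filter.Eventually.of_forall fun z => ?_)
      simp only [hGdef]
      split_ifs with hz <;> simp
    calc ∫ ω in (X ⁻¹' A), Θ ω i ∂ℙ
        = ∫ ω, G (Θ ω, Y ω) ∂ℙ := by
          rw [hX, ← integral_indicator (show MeasurableSet ((fun ω => Θ ω + Y ω) ⁻¹' A) from (hΘmeas.add hYmeas) hA)]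
          refine integral_congr_ae (Filter.Eventually.of_forall fun ω => ?_)
          simp only [hGdef]
          by_cases hω : Θ ω + Y ω ∈ A <;>
            simp [Set.indicator_apply, Set.mem_preimage, hω]
      _ = ∫ z, G z ∂((Measure.map Θ ℙ).prod μY) := by
          rw [← hjoint, integral_map (hΘmeas.prodMk hYmeas).aemeasurable
            hGmeas.aestronglyMeasurable]
      _ = ∫ y, ∫ θ, G (θ, y) ∂(Measure.map Θ ℙ) ∂μY := integral_prod_symm G hGint
      _ = ∫ y, ∫ x, (if x ∈ A then (x - y) i * h (x - y) else 0) ∂volume ∂μY := by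
          refine integral_congr_ae (Filter.Eventually.of_forall fun y => ?_)
          beta_reduce
          rw [hwd (fun θ => G (θ, y)),
            ← integral_add_right_eq_self (fun x => if x ∈ A then (x - y) i * h (x - y) else 0) y]
          refine integral_congr_ae (Filter.Eventually.of_forall fun θ => ?_)
          simp only [hGdef]
          simp only [add_sub_cancel_right]
          by_cases hθ : θ + y ∈ A <;> simp [hθ, mul_comm]
      _ = ∫ x, ∫ y, (if x ∈ A then (x - y) i * h (x - y) else 0) ∂μY ∂volume := by
          refine integral_integral_swap ?_
          have hK_meas : Measurable fun z : (Fin d → ℝ) × (Fin d → ℝ) =>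
              if z.2 ∈ A then (z.2 - z.1) i * h (z.2 - z.1) else 0 := by
            refine Measurable.ite (measurable_snd hA) ?_ measurable_const
            exact ((measurable_pi_apply i).comp (measurable_snd.sub measurable_fst)).mul
              (hh_meas.comp (measurable_snd.sub measurable_fst))
          have hbase : ∀ y : Fin d → ℝ, Integrable (fun x => (x - y) i * h (x - y)) volume :=
            fun y => hθh_int.comp_sub_right y
          have hnormint : ∀ y : Fin d → ℝ,
              ∫ x, ‖(x - y) i * h (x - y)‖ ∂volume = ∫ θ, ‖θ i * h θ‖ ∂volume :=
            fun y => integral_sub_right_eq_self (fun θ => ‖θ i * h θ‖) y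
          refine (integrable_prod_iff ?_).mpr ⟨?_, ?_⟩
          · have := hK_meas.aestronglyMeasurable (μ := μY.prod volume)
            simpa only [Function.uncurry_def] using this
          · refine Filter.Eventually.of_forall fun y => ?_
            simp only [Function.uncurry_apply_pair]
            have := (hbase y).indicator hA
            refine this.congr (Filter.Eventually.of_forall fun x => ?_)
            by_cases hx : x ∈ A <;> simp [Set.indicator_apply, hx]
          · simp only [Function.uncurry_apply_pair]
            refine (integrable_const (∫ θ, ‖θ i * h θ‖ ∂volume)).mono' ?_
              (Filter.Eventually.of_forall fun y => ?_)
            · have hsm : StronglyMeasurable fun z : (Fin d → ℝ) × (Fin d → ℝ) =>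
                  ‖if z.2 ∈ A then (z.2 - z.1) i * h (z.2 - z.1) else 0‖ :=
                hK_meas.norm.stronglyMeasurable
              exact hsm.integral_prod_right'.aestronglyMeasurable
            · have h1 : ∫ x, ‖if x ∈ A then (x - y) i * h (x - y) else 0‖ ∂volume
                  ≤ ∫ x, ‖(x - y) i * h (x - y)‖ ∂volume := by
                refine integral_mono_of_nonneg (Filter.Eventually.of_forall fun x => norm_nonneg _)
                  (hbase y).norm (Filter.Eventually.of_forall fun x => ?_)
                by_cases hx : x ∈ A
                · simp [hx]
                · simp only [hx, if_false, norm_zero]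
                  positivity
              have h2 : (0:ℝ) ≤ ∫ x, ‖if x ∈ A then (x - y) i * h (x - y) else 0‖ ∂volume :=
                integral_nonneg fun x => norm_nonneg _
              rw [Real.norm_of_nonneg h2]
              exact h1.trans (le_of_eq (hnormint y))
      _ = ∫ x in A, (∫ y, (x - y) i * h (x - y) ∂μY) ∂volume := by
          rw [← integral_indicator hA]
          refine integral_congr_ae (Filter.Eventually.of_forall fun x => ?_)
          by_cases hx : x ∈ A <;> simp [Set.indicator_apply, hx]
  -- the formula for g
  have hgxi : ∀ x, g x i = x i + q x / p x := by
    intro x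
    rw [hg, hpdef, hqdef]
  have hgim : Measurable fun x => g x i := by
    have : (fun x => g x i) = fun x => x i + q x / p x := funext fun x => hgxi x
    rw [this]
    exact (measurable_pi_apply i).add (hq_meas.div hp_meas)
  -- pointwise identity
  have hpointwise : ∀ᵐ x ∂(volume : Measure (Fin d → ℝ)),
      (∫ y, (x - y) i * h (x - y) ∂μY) = p x * g x i := by
    filter_upwards [hae] with x hx
    obtain ⟨hint1, hppos, hint2, _⟩ := hx
    have hφmeas : Measurable fun y : Fin d → ℝ => (x + y) i * h (x + y) := by
      exact ((measurable_pi_apply i).comp (measurable_const.add measurable_id)).mul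
        (hmeas_shift x)
    have e1 : (∫ y, (x - y) i * h (x - y) ∂μY) = ∫ y, (x + y) i * h (x + y) ∂μY := by
      have e0 := hint_neg (fun y => (x + y) i * h (x + y)) hφmeas
      simp only [← sub_eq_add_neg] at e0
      exact e0
    have e2 : (∫ y, (x + y) i * h (x + y) ∂μY) = x i * p x + q x := by
      calc ∫ y, (x + y) i * h (x + y) ∂μY
          = ∫ y, (x i * h (x + y) + y i * h (x + y)) ∂μY :=
            integral_congr_ae (Filter.Eventually.of_forall fun y => by
              simp [Pi.add_apply, add_mul])
        _ = x i * p x + q x := by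
            rw [integral_add (hint1.const_mul (x i)) hint2, integral_const_mul,
              ← hpY x, ← hqY x]
    have hne : p x ≠ 0 := ne_of_gt hppos
    rw [e1, e2, hgxi x]
    field_simp
  -- the left-hand side identity
  have hdens_ae : volume.withDensity P
      = volume.withDensity fun x => ((p x).toNNReal : ℝ≥0∞) := by
    refine withDensity_congr_ae ?_
    filter_upwards [hae] with x hx
    rw [hx.2.2.2]
    rfl
  have hLHS : ∀ A : Set (Fin d → ℝ), MeasurableSet A →
      ∫ ω in (X ⁻¹' A), g (X ω) i ∂ℙ = ∫ x in A, p x * g x i ∂volume := by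
    intro A hA
    calc ∫ ω in (X ⁻¹' A), g (X ω) i ∂ℙ
        = ∫ x in A, g x i ∂(Measure.map X ℙ) :=
          (setIntegral_map hA hgim.aestronglyMeasurable hXmeas.aemeasurable).symm
      _ = ∫ x in A, g x i ∂(volume.withDensity fun x => ((p x).toNNReal : ℝ≥0∞)) := by
          rw [hXlaw, hdens_ae]
      _ = ∫ x in A, (p x).toNNReal • g x i ∂volume :=
          setIntegral_withDensity_eq_setIntegral_smul₀
            (hp_meas.real_toNNReal.aemeasurable.restrict) _ hA
      _ = ∫ x in A, p x * g x i ∂volume := by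
          refine setIntegral_congr_ae hA ?_
          filter_upwards [hae] with x hx _
          simp [NNReal.smul_def, Real.coe_toNNReal _ (le_of_lt hx.2.1)]
  -- integrability of q
  have hq_int : Integrable q volume := by
    refine ⟨hq_meas.aestronglyMeasurable, ?_⟩
    have step1 : ∀ x, (‖q x‖₊ : ℝ≥0∞)
        ≤ ∫⁻ y, (‖y i‖₊ : ℝ≥0∞) * ENNReal.ofReal (h (x + y)) ∂μY := by
      intro x
      calc (‖q x‖₊ : ℝ≥0∞) = ‖∫ y, y i * h (x + y) ∂μY‖₊ := by rw [hqY x]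
        _ ≤ ∫⁻ y, ‖y i * h (x + y)‖₊ ∂μY := enorm_integral_le_lintegral_enorm _
        _ = ∫⁻ y, (‖y i‖₊ : ℝ≥0∞) * ENNReal.ofReal (h (x + y)) ∂μY :=
            lintegral_congr fun y => by
              rw [nnnorm_mul, ENNReal.coe_mul, ← Real.enorm_eq_ofReal (hh_nonneg _)]; rfl
    have hYlint : ∫⁻ y, (‖y‖₊ : ℝ≥0∞) ∂μY < ∞ := by
      have : ∫⁻ y, (‖y‖₊ : ℝ≥0∞) ∂μY = ∫⁻ ω, (‖Y ω‖₊ : ℝ≥0∞) ∂ℙ := by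
        rw [hμYdef]
        exact lintegral_map (by exact measurable_nnnorm.coe_nnreal_ennreal) hYmeas
      rw [this]
      exact hY_int.2
    show (∫⁻ x, (‖q x‖₊ : ℝ≥0∞) ∂volume) < ∞
    calc ∫⁻ x, (‖q x‖₊ : ℝ≥0∞) ∂volume
        ≤ ∫⁻ x, ∫⁻ y, (‖y i‖₊ : ℝ≥0∞) * ENNReal.ofReal (h (x + y)) ∂μY ∂volume :=
          lintegral_mono step1
      _ = ∫⁻ y, ∫⁻ x, (‖y i‖₊ : ℝ≥0∞) * ENNReal.ofReal (h (x + y)) ∂volume ∂μY := by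
          refine lintegral_lintegral_swap (Measurable.aemeasurable ?_)
          exact ((measurable_nnnorm.coe_nnreal_ennreal.comp
            ((measurable_pi_apply i).comp measurable_snd)).mul
            (ENNReal.measurable_ofReal.comp (hh_meas.comp (measurable_fst.add measurable_snd))))
      _ = ∫⁻ y, (‖y i‖₊ : ℝ≥0∞) ∂μY := by
          refine lintegral_congr fun y => ?_
          have hm : Measurable fun x : Fin d → ℝ => ENNReal.ofReal (h (x + y)) := by
            exact ENNReal.measurable_ofReal.comp (hh_meas.comp (measurable_id.add measurable_const))
          rw [lintegral_const_mul _ hm]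
          have h1 : ∫⁻ x, ENNReal.ofReal (h (x + y)) ∂volume = 1 := by
            rw [← hTotal]
            exact lintegral_add_right_eq_self (fun x => ENNReal.ofReal (h x)) y
          rw [h1, mul_one]
      _ ≤ ∫⁻ y, (‖y‖₊ : ℝ≥0∞) ∂μY := by
          refine lintegral_mono fun y => ENNReal.coe_le_coe.mpr ?_
          have : ‖y i‖ ≤ ‖y‖ := norm_le_pi_norm y i
          exact this
      _ < ∞ := hYlint
  -- finiteness of P a.e.
  have hPlt : ∀ᵐ x ∂(volume : Measure (Fin d → ℝ)), P x < ∞ := by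
    filter_upwards [hae] with x hx
    rw [hx.2.2.2]
    exact ENNReal.ofReal_lt_top
  -- integrability of g ∘ X
  have hXi_int : Integrable (fun ω => X ω i) ℙ := by
    have : (fun ω => X ω i) = fun ω => Θ ω i + Y ω i := by
      funext ω; rw [hX]; simp
    rw [this]
    exact hΘi_int.add hYi_int
  have hr_int : Integrable (fun ω => q (X ω) / p (X ω)) ℙ := by
    have hr_meas : Measurable fun x => q x / p x := hq_meas.div hp_meas
    have hmapint : Integrable (fun x => q x / p x) (Measure.map X ℙ) := by
      rw [hXlaw, integrable_withDensity_iff hP_meas hPlt]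
      refine hq_int.congr ?_
      filter_upwards [hae] with x hx
      rw [hx.2.2.2, ENNReal.toReal_ofReal (le_of_lt hx.2.1),
        div_mul_cancel₀ (q x) (ne_of_gt hx.2.1)]
    exact (integrable_map_measure hr_meas.aestronglyMeasurable hXmeas.aemeasurable).mp hmapint
  have hgX_int : Integrable (fun ω => g (X ω) i) ℙ := by
    have : (fun ω => g (X ω) i) = fun ω => X ω i + q (X ω) / p (X ω) :=
      funext fun ω => hgxi (X ω)
    rw [this]
    exact hXi_int.add hr_int
  -- conditional expectation machinery
  have hm : MeasurableSpace.comap X (inferInstance : MeasurableSpace (Fin d → ℝ))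
      ≤ (inferInstance : MeasurableSpace Ω) := hXmeas.comap_le
  haveI : SigmaFinite ((ℙ : Measure Ω).trim hm) := by
    have := isFiniteMeasure_trim (μ := (ℙ : Measure Ω)) hm
    infer_instance
  refine (ae_eq_condExp_of_forall_setIntegral_eq hm hΘi_int
    (fun s _ _ => hgX_int.integrableOn) ?_ ?_).symm
  · intro s hs _
    obtain ⟨A, hA, rfl⟩ := hs
    rw [hLHS A hA, hRHS A hA]
    refine (setIntegral_congr_ae hA ?_).symm
    filter_upwards [hpointwise] with x hx _
    exact hx
  · exact StronglyMeasurable.aestronglyMeasurable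
      ((hgim.comp (comap_measurable X)).stronglyMeasurable)
end

section
/- Let a, q > 0, p_1, p_2, b_1, b_2 > 0. Let W_1 and W_2 be independent positive random variables with W_i^a distributed Gamma(p_i, b_i^{−a}), and let Θ be a positive random variable independent of (W_1, W_2) with P(Θ > x) > 0 for all x and regularly varying right tail of index −q, i.e., lim_{x→∞} P(Θ > tx)/P(Θ > x) = t^{−q} for every t > 0. Set X_i = Θ^{1/a} W_i. Then for any constants c_1, c_2 > 0, lim_{t→∞} P(X_1 > c_1 t, X_2 > c_2 t)/P(X_1 > t) = E[(min(W_1/c_1, W_2/c_2))^{aq}] / E[W_1^{aq}], and this limit is strictly positive and finite. -/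
open MeasureTheory ProbabilityTheory Filter Set



/-- For `m ≥ 1` there is `k` with `m ≤ 2^k ≤ 2m`. -/
lemma exists_pow_between {m : ℝ} (hm : 1 ≤ m) :
    ∃ k : ℕ, m ≤ 2 ^ k ∧ (2:ℝ) ^ k ≤ 2 * m := by
  have hm0 : 0 < m := lt_of_lt_of_le one_pos hm
  refine ⟨⌈Real.logb 2 m⌉₊, ?_, ?_⟩
  · calc m = 2 ^ Real.logb 2 m := (Real.rpow_logb two_pos (by norm_num) hm0).symm
      _ ≤ 2 ^ ((⌈Real.logb 2 m⌉₊ : ℝ)) :=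
          Real.rpow_le_rpow_of_exponent_le one_le_two (Nat.le_ceil _)
      _ = 2 ^ ⌈Real.logb 2 m⌉₊ := Real.rpow_natCast 2 _
  · rcases Nat.eq_zero_or_pos ⌈Real.logb 2 m⌉₊ with h0 | h0
    · rw [h0]; norm_num; linarith
    · obtain ⟨j, hj⟩ := Nat.exists_eq_succ_of_ne_zero h0.ne'
      have hjlt : (j : ℝ) < Real.logb 2 m := Nat.lt_ceil.mp (by omega)
      have hlt : (2:ℝ) ^ (j:ℝ) < m := by
        calc (2:ℝ)^(j:ℝ) < 2 ^ Real.logb 2 m :=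
              Real.rpow_lt_rpow_of_exponent_lt one_lt_two hjlt
          _ = m := Real.rpow_logb two_pos (by norm_num) hm0
      rw [Real.rpow_natCast] at hlt
      rw [hj, pow_succ]
      linarith

/-- Potter-type bound derived from a doubling estimate. -/
lemma potter_bound {F : ℝ → ℝ} {q x₀ : ℝ} (hq : 0 < q)
    (hanti : Antitone F) (hpos : ∀ x, 0 < F x) (hle : ∀ x, F x ≤ 1)
    (hx₀ : 1 ≤ x₀) (hstep : ∀ x, x₀ ≤ x → F (x / 2) ≤ 2 ^ (q+1) * F x) :
    ∃ C, 0 < C ∧ ∀ x, x₀ ≤ x → ∀ v, 0 < v →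
      F (x / v) ≤ C * max v 1 ^ (q+1) * F x := by
  have h2 : (0:ℝ) < 2 ^ (q+1) := Real.rpow_pos_of_pos two_pos _
  have hx₀0 : (0:ℝ) < x₀ := lt_of_lt_of_le one_pos hx₀
  -- iterated doubling
  have key : ∀ k : ℕ, ∀ x : ℝ, x₀ * 2 ^ k ≤ x →
      F (x / 2 ^ k) ≤ (2 ^ (q+1)) ^ k * F x := by
    intro k
    induction k with
    | zero => intro x hx; simp
    | succ n ih =>
      intro x hx
      have hpow : (0:ℝ) < 2 ^ n := by positivity
      have hx0 : (0:ℝ) < x := lt_of_lt_of_le (by positivity) hx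
      have h1 : x₀ * 2 ^ n ≤ x / 2 := by
        rw [le_div_iff₀ two_pos, mul_assoc, ← pow_succ]; exact hx
      have hxx₀ : x₀ ≤ x := by
        have h1' : (1:ℝ) ≤ 2 ^ (n+1) := one_le_pow₀ one_le_two
        nlinarith
      have hA : F (x / 2 / 2 ^ n) ≤ (2 ^ (q+1))^n * F (x/2) := ih (x/2) h1
      have hB : F (x/2) ≤ 2^(q+1) * F x := hstep x hxx₀
      have heq : x / 2 / 2 ^ n = x / 2 ^ (n+1) := by
        rw [div_div, ← pow_succ']
      rw [heq] at hA
      calc F (x / 2 ^ (n+1)) ≤ (2 ^ (q+1))^n * F (x/2) := hA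
        _ ≤ (2 ^ (q+1))^n * (2^(q+1) * F x) :=
            mul_le_mul_of_nonneg_left hB (by positivity)
        _ = (2 ^ (q+1))^(n+1) * F x := by ring
  -- convert the exponent
  have pow_form : ∀ k : ℕ, ((2:ℝ) ^ (q+1)) ^ k = ((2:ℝ) ^ k) ^ (q+1) := by
    intro k
    rw [← Real.rpow_natCast ((2:ℝ)^(q+1)) k, ← Real.rpow_natCast (2:ℝ) k,
      ← Real.rpow_mul (by norm_num), ← Real.rpow_mul (by norm_num), mul_comm]
  have keyA : ∀ m : ℝ, 1 ≤ m → ∀ x : ℝ, x₀ * (2 * m) ≤ x →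
      F (x / m) ≤ 2^(q+1) * m^(q+1) * F x := by
    intro m hm x hx
    obtain ⟨k, hk1, hk2⟩ := exists_pow_between hm
    have hm0 : (0:ℝ) < m := lt_of_lt_of_le one_pos hm
    have hx0 : (0:ℝ) < x := lt_of_lt_of_le (by positivity) hx
    have hkx : x₀ * 2 ^ k ≤ x := le_trans (by nlinarith) hx
    have hpk : (0:ℝ) < 2 ^ k := by positivity
    have hmono : F (x / m) ≤ F (x / 2 ^ k) :=
      hanti (div_le_div_of_nonneg_left hx0.le hm0 hk1)
    calc F (x/m) ≤ F (x / 2 ^ k) := hmono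
      _ ≤ (2 ^ (q+1))^k * F x := key k x hkx
      _ = ((2:ℝ)^k)^(q+1) * F x := by rw [pow_form]
      _ ≤ (2*m)^(q+1) * F x := by
          apply mul_le_mul_of_nonneg_right _ (hpos x).le
          exact Real.rpow_le_rpow hpk.le hk2 (by positivity)
      _ = 2^(q+1) * m^(q+1) * F x := by
          rw [Real.mul_rpow (by norm_num) hm0.le]
  have keyB : ∀ x : ℝ, x₀ ≤ x → F x₀ ≤ (2*(x/x₀))^(q+1) * F x := by
    intro x hx
    have hx0 : (0:ℝ) < x := lt_of_lt_of_le hx₀0 hx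
    have hm : 1 ≤ x / x₀ := (one_le_div hx₀0).mpr hx
    obtain ⟨k, hk1, hk2⟩ := exists_pow_between hm
    have hpk : (0:ℝ) < 2 ^ k := by positivity
    have h1 : F (x₀ * 2 ^ k / 2 ^ k) ≤ (2 ^ (q+1)) ^ k * F (x₀ * 2 ^ k) :=
      key k (x₀ * 2 ^ k) le_rfl
    rw [mul_div_assoc, div_self hpk.ne', mul_one] at h1
    have hxle : x ≤ x₀ * 2 ^ k := by
      have := mul_le_mul_of_nonneg_left hk1 hx₀0.le
      calc x = x₀ * (x / x₀) := by field_simp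
        _ ≤ x₀ * 2 ^ k := this
    have h2' : F (x₀ * 2 ^ k) ≤ F x := hanti hxle
    calc F x₀ ≤ (2 ^ (q+1)) ^ k * F (x₀ * 2 ^ k) := h1
      _ ≤ (2 ^ (q+1)) ^ k * F x := mul_le_mul_of_nonneg_left h2' (by positivity)
      _ = ((2:ℝ)^k)^(q+1) * F x := by rw [pow_form]
      _ ≤ (2*(x/x₀))^(q+1) * F x := by
          apply mul_le_mul_of_nonneg_right _ (hpos x).le
          exact Real.rpow_le_rpow hpk.le hk2 (by positivity)
  have h4F : (0:ℝ) < 4^(q+1) / F x₀ :=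
    div_pos (Real.rpow_pos_of_pos (by norm_num) _) (hpos x₀)
  refine ⟨2^(q+1) + 4^(q+1) / F x₀, by linarith, ?_⟩
  intro x hx v hv
  set m : ℝ := max v 1 with hmdef
  have hm1 : 1 ≤ m := le_max_right _ _
  have hm0 : (0:ℝ) < m := lt_of_lt_of_le one_pos hm1
  have hx0 : (0:ℝ) < x := lt_of_lt_of_le hx₀0 hx
  have hmrpos : (0:ℝ) < m ^ (q+1) := Real.rpow_pos_of_pos hm0 _
  have hmono : F (x / v) ≤ F (x / m) :=
    hanti (div_le_div_of_nonneg_left hx0.le hv (le_max_left _ _))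
  by_cases hcase : x₀ * (2 * m) ≤ x
  · have := keyA m hm1 x hcase
    have hCF : (2:ℝ)^(q+1) * m^(q+1) * F x ≤
        (2^(q+1) + 4^(q+1) / F x₀) * m^(q+1) * F x := by
      nlinarith [mul_pos hmrpos (hpos x), h4F]
    exact le_trans hmono (le_trans this hCF)
  · push_neg at hcase
    have hFxv : F (x / v) ≤ 1 := hle _
    have hB := keyB x hx
    have hlt : 2 * (x / x₀) ≤ 4 * m := by
      have : x / x₀ < 2 * m := (div_lt_iff₀ hx₀0).mpr (by nlinarith)
      linarith
    have h4 : (2*(x/x₀))^(q+1) ≤ (4*m)^(q+1) :=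
      Real.rpow_le_rpow (by positivity) hlt (by positivity)
    have h5 : F x₀ ≤ (4*m)^(q+1) * F x :=
      le_trans hB (mul_le_mul_of_nonneg_right h4 (hpos x).le)
    have h6 : (4*m)^(q+1) = 4^(q+1) * m^(q+1) :=
      Real.mul_rpow (by norm_num) hm0.le
    have h7 : (1:ℝ) ≤ 4^(q+1) / F x₀ * m^(q+1) * F x := by
      rw [h6] at h5
      rw [div_mul_eq_mul_div, div_mul_eq_mul_div, le_div_iff₀ (hpos x₀), one_mul]
      linarith
    have h8 : (0:ℝ) ≤ 2^(q+1) * m^(q+1) * F x := (mul_pos (mul_pos h2 hmrpos) (hpos x)).le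
    calc F (x/v) ≤ 1 := hFxv
      _ ≤ 4^(q+1) / F x₀ * m^(q+1) * F x := h7
      _ ≤ (2^(q+1) + 4^(q+1) / F x₀) * m^(q+1) * F x := by
          nlinarith [mul_pos hmrpos (hpos x), h2]



lemma integrable_max_rpow_gamma {p r s : ℝ} (hp : 0 < p) (hr : 0 < r) (hs : 0 ≤ s) :
    Integrable (fun x : ℝ => max x 1 ^ s) (gammaMeasure p r) := by
  rw [gammaMeasure, integrable_withDensity_iff
    (show Measurable (gammaPDF p r) from (measurable_gammaPDFReal p r).ennreal_ofReal)
    (ae_of_all _ fun x => ENNReal.ofReal_lt_top)]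
  have htoReal : ∀ x : ℝ, (ENNReal.ofReal (gammaPDFReal p r x)).toReal
      = gammaPDFReal p r x := fun x =>
    ENNReal.toReal_ofReal (gammaPDFReal_nonneg hp hr x)
  simp only [gammaPDF, htoReal]
  have hfun : (fun x : ℝ => max x 1 ^ s * gammaPDFReal p r x)
      = (Ici (0:ℝ)).indicator (fun x => max x 1 ^ s * gammaPDFReal p r x) := by
    funext x
    by_cases hx : (0:ℝ) ≤ x
    · rw [Set.indicator_of_mem (mem_Ici.mpr hx)]
    · rw [Set.indicator_of_notMem (fun h => hx (mem_Ici.mp h))]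
      have : gammaPDFReal p r x = 0 := by
        rw [gammaPDFReal, if_neg hx]
      rw [this, mul_zero]
  rw [hfun, integrable_indicator_iff measurableSet_Ici,
    integrableOn_Ici_iff_integrableOn_Ioi]
  have hmeas : AEStronglyMeasurable (fun x : ℝ => max x 1 ^ s * gammaPDFReal p r x)
      (volume.restrict (Ioi 0)) := by
    apply Measurable.aestronglyMeasurable
    have h1 : Measurable fun x : ℝ => max x 1 ^ s := by fun_prop
    exact h1.mul (measurable_gammaPDFReal p r)
  set K : ℝ := r ^ p / Real.Gamma p with hK
  have hKpos : 0 < K := by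
    have := Real.Gamma_pos_of_pos hp
    positivity
  -- dominating function
  have hint1 : IntegrableOn (fun x : ℝ => x ^ (s + p - 1) * Real.exp (-r * x)) (Ioi 0) := by
    have := integrableOn_rpow_mul_exp_neg_mul_rpow
      (show (-1:ℝ) < s + p - 1 by linarith) (one_pos : (0:ℝ) < 1) hr
    simpa [Real.rpow_one] using this
  have hint2 : IntegrableOn (fun x : ℝ => x ^ (p - 1) * Real.exp (-r * x)) (Ioi 0) := by
    have := integrableOn_rpow_mul_exp_neg_mul_rpow
      (show (-1:ℝ) < p - 1 by linarith) (one_pos : (0:ℝ) < 1) hr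
    simpa [Real.rpow_one] using this
  have hbound : IntegrableOn
      (fun x : ℝ => K * (x ^ (s + p - 1) * Real.exp (-r * x)
        + x ^ (p - 1) * Real.exp (-r * x))) (Ioi 0) :=
    (hint1.add hint2).const_mul K
  refine Integrable.mono hbound hmeas ?_
  rw [ae_restrict_iff' measurableSet_Ioi]
  refine ae_of_all _ fun x hx => ?_
  have hx0 : (0:ℝ) < x := hx
  have hpdf : gammaPDFReal p r x = K * x ^ (p-1) * Real.exp (-(r*x)) := by
    rw [gammaPDFReal, if_pos hx0.le]
  have hmax : max x 1 ^ s ≤ x ^ s + 1 := by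
    rcases le_total x 1 with h | h
    · rw [max_eq_right h, Real.one_rpow]
      have : (0:ℝ) ≤ x ^ s := Real.rpow_nonneg hx0.le s
      linarith
    · rw [max_eq_left h]
      have : (0:ℝ) ≤ 1 := zero_le_one
      nlinarith [Real.rpow_nonneg hx0.le s]
  have hexp : (0:ℝ) < Real.exp (-(r*x)) := Real.exp_pos _
  have hxp : (0:ℝ) ≤ x ^ (p-1) := Real.rpow_nonneg hx0.le _
  have hprod : max x 1 ^ s * gammaPDFReal p r x
      ≤ (x ^ s + 1) * (K * x ^ (p-1) * Real.exp (-(r*x))) := by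
    rw [hpdf]
    apply mul_le_mul_of_nonneg_right hmax
    positivity
  have hring : (x ^ s + 1) * (K * x ^ (p-1) * Real.exp (-(r*x)))
      = K * (x ^ (s + p - 1) * Real.exp (-r * x) + x ^ (p-1) * Real.exp (-r * x)) := by
    have hxs : x ^ s * x ^ (p-1) = x ^ (s + p - 1) := by
      rw [← Real.rpow_add hx0]; ring_nf
    rw [neg_mul, mul_add, ← hxs]
    ring
  have hnonneg : (0:ℝ) ≤ max x 1 ^ s * gammaPDFReal p r x := by
    apply mul_nonneg (Real.rpow_nonneg (le_max_of_le_right zero_le_one) s)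
      (gammaPDFReal_nonneg hp hr x)
  rw [Real.norm_eq_abs, abs_of_nonneg hnonneg]
  calc max x 1 ^ s * gammaPDFReal p r x
      ≤ (x ^ s + 1) * (K * x ^ (p-1) * Real.exp (-(r*x))) := hprod
    _ = K * (x ^ (s + p - 1) * Real.exp (-r * x) + x ^ (p-1) * Real.exp (-r * x)) := hring
    _ ≤ ‖K * (x ^ (s + p - 1) * Real.exp (-r * x) + x ^ (p-1) * Real.exp (-r * x))‖ :=
        le_abs_self _

lemma breiman {Ω : Type*} [MeasureSpace Ω] [IsProbabilityMeasure (ℙ : Measure Ω)]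
    {q : ℝ} (hq : 0 < q)
    {Θ : Ω → ℝ} (hΘmeas : Measurable Θ)
    (hΘtail_pos : ∀ x : ℝ, 0 < ℙ {ω | x < Θ ω})
    (hΘrv : ∀ t : ℝ, 0 < t →
      Tendsto (fun x => (ℙ {ω | t * x < Θ ω}).toReal / (ℙ {ω | x < Θ ω}).toReal)
        atTop (nhds (t ^ (-q))))
    {V : Ω → ℝ} (hVmeas : Measurable V) (hVpos : ∀ ω, 0 < V ω)
    (hindep : IndepFun Θ V ℙ)
    (hVint : Integrable (fun ω => max (V ω) 1 ^ (q + 1)) ℙ) :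
    Tendsto (fun x => (ℙ {ω | x < Θ ω * V ω}).toReal / (ℙ {ω | x < Θ ω}).toReal)
      atTop (nhds (∫ ω, V ω ^ q ∂ℙ)) := by
  classical
  set F : ℝ → ℝ := fun y => (ℙ {ω | y < Θ ω}).toReal with hF
  have hFpos : ∀ y, 0 < F y :=
    fun y => ENNReal.toReal_pos (hΘtail_pos y).ne' (measure_ne_top _ _)
  have hFle : ∀ y, F y ≤ 1 := by
    intro y
    have h1 : ℙ {ω | y < Θ ω} ≤ 1 := prob_le_one
    have := ENNReal.toReal_mono (by norm_num) h1
    simpa using this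
  have hFanti : Antitone F := by
    intro y z hyz
    exact ENNReal.toReal_mono (measure_ne_top _ _)
      (measure_mono (fun ω h => lt_of_le_of_lt hyz h))
  -- the doubling estimate
  have h12 : ((1:ℝ)/2) ^ (-q) = 2 ^ q := by
    rw [one_div, Real.inv_rpow (by norm_num : (0:ℝ) ≤ 2), Real.rpow_neg (by norm_num), inv_inv]
  have hlim2 : Tendsto (fun x => F (x/2) / F x) atTop (nhds ((2:ℝ)^q)) := by
    have h := hΘrv (1/2) (by norm_num)
    rw [h12] at h
    refine h.congr fun x => ?_
    have hxx : (1:ℝ)/2 * x = x / 2 := by ring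
    rw [hF, hxx]
  have h2lt : (2:ℝ)^q < 2^(q+1) :=
    (Real.rpow_lt_rpow_left_iff one_lt_two).mpr (lt_add_one q)
  obtain ⟨x₀', hx₀'⟩ := eventually_atTop.mp
    ((hlim2.eventually_lt_const h2lt).and (eventually_ge_atTop (1:ℝ)))
  set x₀ : ℝ := max x₀' 1 with hx₀def
  have hx₀1 : (1:ℝ) ≤ x₀ := le_max_right _ _
  have hstep : ∀ x, x₀ ≤ x → F (x / 2) ≤ 2 ^ (q+1) * F x := by
    intro x hx
    have := hx₀' x (le_trans (le_max_left _ _) hx)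
    exact le_of_lt ((div_lt_iff₀ (hFpos x)).mp this.1)
  obtain ⟨C, hCpos, hC⟩ := potter_bound hq hFanti hFpos hFle hx₀1 hstep
  -- joint law
  set μΘ : Measure ℝ := Measure.map Θ ℙ with hμΘ
  set μV : Measure ℝ := Measure.map V ℙ with hμV
  haveI : IsProbabilityMeasure μΘ := Measure.isProbabilityMeasure_map hΘmeas.aemeasurable
  haveI : IsProbabilityMeasure μV := Measure.isProbabilityMeasure_map hVmeas.aemeasurable
  have hS : ∀ x : ℝ, MeasurableSet {p : ℝ × ℝ | x < p.1 * p.2} :=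
    fun x => measurableSet_lt measurable_const (measurable_fst.mul measurable_snd)
  have hjoint : Measure.map (fun ω => (Θ ω, V ω)) ℙ = μΘ.prod μV :=
    (indepFun_iff_map_prod_eq_prod_map_map hΘmeas.aemeasurable hVmeas.aemeasurable).mp hindep
  have hGmeas : ∀ x : ℝ, Measurable (fun v : ℝ => μΘ {θ : ℝ | x < θ * v}) := by
    intro x
    exact measurable_measure_prodMk_right (hS x)
  have hrepr : ∀ x : ℝ, (ℙ {ω | x < Θ ω * V ω}).toReal
      = ∫ v, (μΘ {θ : ℝ | x < θ * v}).toReal ∂μV := by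
    intro x
    have h1 : ℙ {ω | x < Θ ω * V ω} = (μΘ.prod μV) {p : ℝ × ℝ | x < p.1 * p.2} := by
      rw [← hjoint, Measure.map_apply (hΘmeas.prodMk hVmeas) (hS x)]
      rfl
    rw [h1, Measure.prod_apply_symm (hS x)]
    exact (integral_toReal (hGmeas x).aemeasurable
      (ae_of_all _ fun v => measure_lt_top μΘ _)).symm
  have hVae : ∀ᵐ v ∂μV, 0 < v := by
    rw [hμV, MeasureTheory.ae_map_iff hVmeas.aemeasurable measurableSet_Ioi]
    exact ae_of_all _ hVpos
  have hFG : ∀ x : ℝ, ∀ v : ℝ, 0 < v → (μΘ {θ : ℝ | x < θ * v}).toReal = F (x / v) := by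
    intro x v hv
    have hset : {θ : ℝ | x < θ * v} = Set.Ioi (x / v) := by
      ext θ
      simp [Set.mem_Ioi, div_lt_iff₀ hv]
    rw [hset, hμΘ, Measure.map_apply hΘmeas measurableSet_Ioi]
    rfl
  have hIq : ∫ v, v ^ q ∂μV = ∫ ω, V ω ^ q ∂ℙ :=
    integral_map hVmeas.aemeasurable
      (by fun_prop : Measurable fun v : ℝ => v ^ q).aestronglyMeasurable
  have hDCT : Tendsto (fun x => ∫ v, (μΘ {θ : ℝ | x < θ * v}).toReal / F x ∂μV)
      atTop (nhds (∫ v, v ^ q ∂μV)) := by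
    apply tendsto_integral_filter_of_dominated_convergence
      (bound := fun v => C * max v 1 ^ (q+1))
    · exact Eventually.of_forall fun x =>
        (((hGmeas x).ennreal_toReal).div_const _).aestronglyMeasurable
    · filter_upwards [eventually_ge_atTop x₀] with x hx
      filter_upwards [hVae] with v hv
      rw [hFG x v hv]
      have hb := hC x hx v hv
      rw [Real.norm_eq_abs, abs_of_nonneg (div_nonneg (hFpos _).le (hFpos x).le)]
      exact (div_le_iff₀ (hFpos x)).mpr hb
    · have hmeasb : AEStronglyMeasurable (fun v : ℝ => C * max v 1 ^ (q+1)) μV :=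
        (by fun_prop : Measurable fun v : ℝ => C * max v 1 ^ (q+1)).aestronglyMeasurable
      rw [integrable_map_measure hmeasb hVmeas.aemeasurable]
      exact hVint.const_mul C
    · filter_upwards [hVae] with v hv
      have hlim := hΘrv v⁻¹ (inv_pos.mpr hv)
      have hval : (v⁻¹ : ℝ) ^ (-q) = v ^ q := by
        rw [Real.inv_rpow hv.le, Real.rpow_neg hv.le, inv_inv]
      rw [hval] at hlim
      refine hlim.congr fun x => ?_
      rw [hFG x v hv, hF]
      have : v⁻¹ * x = x / v := by field_simp
      rw [this]
  have hfinal := hDCT.congr fun x => by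
    rw [integral_div, ← hrepr x]
  rw [hIq] at hfinal
  exact hfinal


open MeasureTheory ProbabilityTheory Filter

/-- **Joint tail asymptotics in the MGB2-type random scale model.**
Let `W_1, W_2` be independent positive random variables with `W_i^a ∼ Gamma(p_i, b_i^{−a})`,
and let `Θ > 0` be independent of `(W_1, W_2)` with a regularly varying right tail of index
`−q`. Set `X_i = Θ^{1/a} W_i`. Then for constants `c_1, c_2 > 0`,
`P(X_1 > c_1 t, X_2 > c_2 t)/P(X_1 > t) → E[(min(W_1/c_1, W_2/c_2))^{aq}] / E[W_1^{aq}]`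
as `t → ∞`, and this limit is strictly positive and finite. -/
theorem joint_tail_random_scale_regular_variation
    {Ω : Type*} [MeasureSpace Ω] [IsProbabilityMeasure (ℙ : Measure Ω)]
    (a q p₁ p₂ b₁ b₂ : ℝ) (ha : 0 < a) (hq : 0 < q)
    (hp₁ : 0 < p₁) (hp₂ : 0 < p₂) (hb₁ : 0 < b₁) (hb₂ : 0 < b₂)
    (W₁ W₂ : Ω → ℝ) (hW₁meas : Measurable W₁) (hW₂meas : Measurable W₂)
    (hW₁pos : ∀ ω, 0 < W₁ ω) (hW₂pos : ∀ ω, 0 < W₂ ω)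
    (hW₁ : Measure.map (fun ω => W₁ ω ^ a) ℙ = gammaMeasure p₁ (b₁ ^ (-a)))
    (hW₂ : Measure.map (fun ω => W₂ ω ^ a) ℙ = gammaMeasure p₂ (b₂ ^ (-a)))
    (hWindep : IndepFun W₁ W₂ ℙ)
    (Θ : Ω → ℝ) (hΘmeas : Measurable Θ) (hΘpos : ∀ ω, 0 < Θ ω)
    (hΘindep : IndepFun Θ (fun ω => (W₁ ω, W₂ ω)) ℙ)
    (hΘtail_pos : ∀ x : ℝ, 0 < ℙ {ω | x < Θ ω})
    (hΘrv : ∀ t : ℝ, 0 < t →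
      Tendsto (fun x => (ℙ {ω | t * x < Θ ω}).toReal / (ℙ {ω | x < Θ ω}).toReal)
        atTop (nhds (t ^ (-q))))
    (X₁ X₂ : Ω → ℝ) (hX₁ : X₁ = fun ω => Θ ω ^ (1 / a) * W₁ ω)
    (hX₂ : X₂ = fun ω => Θ ω ^ (1 / a) * W₂ ω)
    (c₁ c₂ : ℝ) (hc₁ : 0 < c₁) (hc₂ : 0 < c₂)
    (L : ℝ) (hL : L = (∫ ω, min (W₁ ω / c₁) (W₂ ω / c₂) ^ (a * q) ∂ℙ) /
      (∫ ω, W₁ ω ^ (a * q) ∂ℙ)) :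
    Integrable (fun ω => W₁ ω ^ (a * q)) ℙ ∧
    Integrable (fun ω => min (W₁ ω / c₁) (W₂ ω / c₂) ^ (a * q)) ℙ ∧
    0 < L ∧
    Tendsto (fun t => (ℙ {ω | c₁ * t < X₁ ω ∧ c₂ * t < X₂ ω}).toReal /
        (ℙ {ω | t < X₁ ω}).toReal) atTop (nhds L) := by
  subst hX₁ hX₂ hL
  -- the two scale variables
  have hminpos : ∀ ω, 0 < min (W₁ ω / c₁) (W₂ ω / c₂) := fun ω =>
    lt_min (div_pos (hW₁pos ω) hc₁) (div_pos (hW₂pos ω) hc₂)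
  have hV₁pos : ∀ ω, 0 < W₁ ω ^ a := fun ω => Real.rpow_pos_of_pos (hW₁pos ω) a
  have hVmpos : ∀ ω, 0 < min (W₁ ω / c₁) (W₂ ω / c₂) ^ a := fun ω =>
    Real.rpow_pos_of_pos (hminpos ω) a
  have hV₁meas : Measurable (fun ω => W₁ ω ^ a) := by fun_prop
  have hVmmeas : Measurable (fun ω => min (W₁ ω / c₁) (W₂ ω / c₂) ^ a) := by fun_prop
  -- independence of Θ from each scale variable
  have hind₁ : IndepFun Θ (fun ω => W₁ ω ^ a) ℙ :=
    hΘindep.comp measurable_id (by fun_prop : Measurable fun w : ℝ × ℝ => w.1 ^ a)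
  have hindm : IndepFun Θ (fun ω => min (W₁ ω / c₁) (W₂ ω / c₂) ^ a) ℙ :=
    hΘindep.comp measurable_id
      (by fun_prop : Measurable fun w : ℝ × ℝ => min (w.1 / c₁) (w.2 / c₂) ^ a)
  -- moment bounds
  have hq1 : (0:ℝ) ≤ q + 1 := by linarith
  have hgam := integrable_max_rpow_gamma hp₁ (Real.rpow_pos_of_pos hb₁ (-a)) hq1
  rw [← hW₁] at hgam
  have hm₁ : Integrable (fun ω => max (W₁ ω ^ a) 1 ^ (q+1)) ℙ :=
    (integrable_map_measure
      ((by fun_prop : Measurable fun x : ℝ => max x 1 ^ (q+1)).aestronglyMeasurable)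
      hV₁meas.aemeasurable).mp hgam
  have hmm : Integrable (fun ω => max (min (W₁ ω / c₁) (W₂ ω / c₂) ^ a) 1 ^ (q+1)) ℙ := by
    set K : ℝ := 1 / c₁ ^ a with hK
    have hKpos : 0 < K := by
      have := Real.rpow_pos_of_pos hc₁ a
      positivity
    refine Integrable.mono (hm₁.const_mul ((K+1)^(q+1))) ?_ ?_
    · exact ((by fun_prop :
        Measurable fun ω => max (min (W₁ ω / c₁) (W₂ ω / c₂) ^ a) 1 ^ (q+1))).aestronglyMeasurable
    · refine ae_of_all _ fun ω => ?_
      have hVle : min (W₁ ω / c₁) (W₂ ω / c₂) ^ a ≤ K * W₁ ω ^ a := by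
        have h1 : min (W₁ ω / c₁) (W₂ ω / c₂) ≤ W₁ ω / c₁ := min_le_left _ _
        have h2 : min (W₁ ω / c₁) (W₂ ω / c₂) ^ a ≤ (W₁ ω / c₁) ^ a :=
          Real.rpow_le_rpow (hminpos ω).le h1 ha.le
        have h3 : (W₁ ω / c₁) ^ a = W₁ ω ^ a / c₁ ^ a :=
          Real.div_rpow (hW₁pos ω).le hc₁.le a
        rw [h3] at h2
        rw [hK]
        calc min (W₁ ω / c₁) (W₂ ω / c₂) ^ a ≤ W₁ ω ^ a / c₁ ^ a := h2
          _ = 1 / c₁ ^ a * W₁ ω ^ a := by ring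
      have hmaxle : max (min (W₁ ω / c₁) (W₂ ω / c₂) ^ a) 1 ≤ (K+1) * max (W₁ ω ^ a) 1 := by
        have hmax1 : (1:ℝ) ≤ max (W₁ ω ^ a) 1 := le_max_right _ _
        have hmax0 : (0:ℝ) ≤ max (W₁ ω ^ a) 1 := by linarith
        apply max_le
        · calc min (W₁ ω / c₁) (W₂ ω / c₂) ^ a ≤ K * W₁ ω ^ a := hVle
            _ ≤ K * max (W₁ ω ^ a) 1 := by
                apply mul_le_mul_of_nonneg_left (le_max_left _ _) hKpos.le
            _ ≤ (K+1) * max (W₁ ω ^ a) 1 := by nlinarith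
        · nlinarith
      have hlhs : (0:ℝ) ≤ max (min (W₁ ω / c₁) (W₂ ω / c₂) ^ a) 1 ^ (q+1) :=
        Real.rpow_nonneg (le_max_of_le_right zero_le_one) _
      rw [Real.norm_eq_abs, abs_of_nonneg hlhs, Real.norm_eq_abs]
      have hstep : max (min (W₁ ω / c₁) (W₂ ω / c₂) ^ a) 1 ^ (q+1)
          ≤ ((K+1) * max (W₁ ω ^ a) 1) ^ (q+1) :=
        Real.rpow_le_rpow (le_max_of_le_right zero_le_one) hmaxle hq1
      have hsplit : ((K+1) * max (W₁ ω ^ a) 1) ^ (q+1)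
          = (K+1)^(q+1) * max (W₁ ω ^ a) 1 ^ (q+1) :=
        Real.mul_rpow (by linarith) (le_max_of_le_right zero_le_one)
      have habs : (K+1)^(q+1) * max (W₁ ω ^ a) 1 ^ (q+1)
          ≤ |(K+1)^(q+1) * max (W₁ ω ^ a) 1 ^ (q+1)| := le_abs_self _
      calc max (min (W₁ ω / c₁) (W₂ ω / c₂) ^ a) 1 ^ (q+1)
          ≤ ((K+1) * max (W₁ ω ^ a) 1) ^ (q+1) := hstep
        _ = (K+1)^(q+1) * max (W₁ ω ^ a) 1 ^ (q+1) := hsplit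
        _ ≤ |(K+1)^(q+1) * max (W₁ ω ^ a) 1 ^ (q+1)| := habs
  -- `y^q ≤ max y 1 ^ (q+1)` for positive `y`
  have hqbound : ∀ y : ℝ, 0 < y → y ^ q ≤ max y 1 ^ (q+1) := by
    intro y hy
    rcases le_total y 1 with h | h
    · rw [max_eq_right h, Real.one_rpow]
      exact Real.rpow_le_one hy.le h hq.le
    · rw [max_eq_left h]
      exact Real.rpow_le_rpow_of_exponent_le h (by linarith)
  -- integrability of the `q`-th moments
  have hint₁ : Integrable (fun ω => (W₁ ω ^ a) ^ q) ℙ := by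
    refine hm₁.mono ?_ (ae_of_all _ fun ω => ?_)
    · exact ((by fun_prop : Measurable fun ω => (W₁ ω ^ a) ^ q)).aestronglyMeasurable
    · rw [Real.norm_eq_abs, abs_of_nonneg (Real.rpow_nonneg (hV₁pos ω).le q),
        Real.norm_eq_abs]
      exact le_trans (hqbound _ (hV₁pos ω)) (le_abs_self _)
  have hintm : Integrable (fun ω => (min (W₁ ω / c₁) (W₂ ω / c₂) ^ a) ^ q) ℙ := by
    refine hmm.mono ?_ (ae_of_all _ fun ω => ?_)
    · exact ((by fun_prop :
        Measurable fun ω => (min (W₁ ω / c₁) (W₂ ω / c₂) ^ a) ^ q)).aestronglyMeasurable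
    · rw [Real.norm_eq_abs, abs_of_nonneg (Real.rpow_nonneg (hVmpos ω).le q),
        Real.norm_eq_abs]
      exact le_trans (hqbound _ (hVmpos ω)) (le_abs_self _)
  -- rewriting the exponents
  have hfun₁ : (fun ω => W₁ ω ^ (a * q)) = fun ω => (W₁ ω ^ a) ^ q :=
    funext fun ω => Real.rpow_mul (hW₁pos ω).le a q
  have hfunm : (fun ω => min (W₁ ω / c₁) (W₂ ω / c₂) ^ (a * q))
      = fun ω => (min (W₁ ω / c₁) (W₂ ω / c₂) ^ a) ^ q :=
    funext fun ω => Real.rpow_mul (hminpos ω).le a q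
  refine ⟨by rw [hfun₁]; exact hint₁, by rw [hfunm]; exact hintm, ?_, ?_⟩
  -- positivity of the limit
  case _ =>
    rw [hfun₁, hfunm]
    apply div_pos
    · rw [(integral_pos_iff_support_of_nonneg_ae
        (ae_of_all _ fun ω => Real.rpow_nonneg (hVmpos ω).le q) hintm)]
      have : Function.support (fun ω => (min (W₁ ω / c₁) (W₂ ω / c₂) ^ a) ^ q)
          = Set.univ :=
        Set.eq_univ_of_forall fun ω => (Real.rpow_pos_of_pos (hVmpos ω) q).ne'
      rw [this]
      simp
    · rw [(integral_pos_iff_support_of_nonneg_ae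
        (ae_of_all _ fun ω => Real.rpow_nonneg (hV₁pos ω).le q) hint₁)]
      have : Function.support (fun ω => (W₁ ω ^ a) ^ q) = Set.univ :=
        Set.eq_univ_of_forall fun ω => (Real.rpow_pos_of_pos (hV₁pos ω) q).ne'
      rw [this]
      simp
  -- the main convergence
  case _ =>
    have hB₁ := breiman hq hΘmeas hΘtail_pos hΘrv hV₁meas hV₁pos hind₁ hm₁
    have hBm := breiman hq hΘmeas hΘtail_pos hΘrv hVmmeas hVmpos hindm hmm
    have hI₁pos : 0 < ∫ ω, (W₁ ω ^ a) ^ q ∂ℙ := by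
      rw [(integral_pos_iff_support_of_nonneg_ae
        (ae_of_all _ fun ω => Real.rpow_nonneg (hV₁pos ω).le q) hint₁)]
      have : Function.support (fun ω => (W₁ ω ^ a) ^ q) = Set.univ :=
        Set.eq_univ_of_forall fun ω => (Real.rpow_pos_of_pos (hV₁pos ω) q).ne'
      rw [this]
      simp
    have hFpos : ∀ x : ℝ, (0:ℝ) < (ℙ {ω | x < Θ ω}).toReal :=
      fun x => ENNReal.toReal_pos (hΘtail_pos x).ne' (measure_ne_top _ _)
    have hquot : Tendsto (fun x =>
        (ℙ {ω | x < Θ ω * min (W₁ ω / c₁) (W₂ ω / c₂) ^ a}).toReal /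
        (ℙ {ω | x < Θ ω * W₁ ω ^ a}).toReal) atTop
        (nhds ((∫ ω, (min (W₁ ω / c₁) (W₂ ω / c₂) ^ a) ^ q ∂ℙ) /
          (∫ ω, (W₁ ω ^ a) ^ q ∂ℙ))) := by
      refine (hBm.div hB₁ hI₁pos.ne').congr fun x => ?_
      simp only [Pi.div_apply]
      rw [div_div_div_cancel_right₀]
      exact (hFpos x).ne'
    have hcomp : Tendsto (fun t : ℝ => t ^ a) atTop atTop := tendsto_rpow_atTop ha
    have htt := hquot.comp hcomp
    -- identify the limit with L
    have hIm : (∫ ω, (min (W₁ ω / c₁) (W₂ ω / c₂) ^ a) ^ q ∂ℙ)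
        = ∫ ω, min (W₁ ω / c₁) (W₂ ω / c₂) ^ (a * q) ∂ℙ := by rw [hfunm]
    have hI₁ : (∫ ω, (W₁ ω ^ a) ^ q ∂ℙ) = ∫ ω, W₁ ω ^ (a * q) ∂ℙ := by rw [hfun₁]
    rw [hIm, hI₁] at htt
    -- identify the sets
    refine htt.congr' ?_
    have hminrpow : ∀ x y : ℝ, 0 ≤ x → 0 ≤ y → min x y ^ a = min (x^a) (y^a) := by
      intro x y hx hy
      rcases le_total x y with h | h
      · rw [min_eq_left h, min_eq_left (Real.rpow_le_rpow hx h ha.le)]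
      · rw [min_eq_right h, min_eq_right (Real.rpow_le_rpow hy h ha.le)]
    filter_upwards [eventually_gt_atTop (0:ℝ)] with t ht
    have hiff : ∀ ω, ∀ c w : ℝ, 0 < c → 0 < w →
        (c * t < Θ ω ^ (1/a) * w ↔ t ^ a < Θ ω * (w / c) ^ a) := by
      intro ω c w hc hw
      have hθ : 0 < Θ ω := hΘpos ω
      have hA : (0:ℝ) < Θ ω ^ (1/a) := Real.rpow_pos_of_pos hθ _
      have hAa : (Θ ω ^ (1/a)) ^ a = Θ ω := by
        rw [← Real.rpow_mul hθ.le, one_div_mul_cancel ha.ne', Real.rpow_one]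
      constructor
      · intro h
        have h1 : t < Θ ω ^ (1/a) * (w / c) := by
          rw [mul_div_assoc'] at *
          exact (lt_div_iff₀ hc).mpr (by linarith [h])
        have h2 : t ^ a < (Θ ω ^ (1/a) * (w / c)) ^ a :=
          Real.rpow_lt_rpow ht.le h1 ha
        rwa [Real.mul_rpow hA.le (by positivity), hAa] at h2
      · intro h
        have h2 : t ^ a < (Θ ω ^ (1/a) * (w / c)) ^ a := by
          rwa [Real.mul_rpow hA.le (by positivity), hAa]
        have h1 : t < Θ ω ^ (1/a) * (w / c) :=
          (Real.rpow_lt_rpow_iff ht.le (by positivity) ha).mp h2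
        rw [mul_div_assoc'] at h1
        have := (lt_div_iff₀ hc).mp h1
        linarith
    have hnum : {ω | c₁ * t < Θ ω ^ (1/a) * W₁ ω ∧ c₂ * t < Θ ω ^ (1/a) * W₂ ω}
        = {ω | t ^ a < Θ ω * min (W₁ ω / c₁) (W₂ ω / c₂) ^ a} := by
      ext ω
      simp only [Set.mem_setOf_eq]
      rw [hiff ω c₁ (W₁ ω) hc₁ (hW₁pos ω), hiff ω c₂ (W₂ ω) hc₂ (hW₂pos ω)]
      rw [hminrpow _ _ (div_pos (hW₁pos ω) hc₁).le (div_pos (hW₂pos ω) hc₂).le,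
        mul_min_of_nonneg _ _ (hΘpos ω).le, lt_min_iff]
    have hden : {ω | t < Θ ω ^ (1/a) * W₁ ω} = {ω | t ^ a < Θ ω * W₁ ω ^ a} := by
      ext ω
      simp only [Set.mem_setOf_eq]
      have := hiff ω 1 (W₁ ω) one_pos (hW₁pos ω)
      rw [one_mul, div_one] at this
      exact this
    show (ℙ {ω | t ^ a < Θ ω * min (W₁ ω / c₁) (W₂ ω / c₂) ^ a}).toReal /
        (ℙ {ω | t ^ a < Θ ω * W₁ ω ^ a}).toReal = _
    rw [← hnum, ← hden]
end

section
/- (Breiman's lemma.) Let Θ be a positive random variable with P(Θ > x) > 0 for all x and regularly varying right tail of index −q for some q > 0, i.e., lim_{x→∞} P(Θ > tx)/P(Θ > x) = t^{−q} for every t > 0. Let W be a nonnegative random variable independent of Θ with E[W^{q+ε}] < ∞ for some ε > 0. Then lim_{t→∞} P(ΘW > t)/P(Θ > t) = E[W^q]. -/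
open MeasureTheory ProbabilityTheory Filter

/-- Lower Potter-type bound for an antitone positive function whose ratio at scale 2
tends to `2 ^ (-q)`. -/
lemma potter_lower (G : ℝ → ℝ) (hpos : ∀ x, 0 < G x) (hanti : Antitone G)
    (q δ : ℝ) (hq : 0 < q) (hδ : 0 < δ)
    (h2 : Tendsto (fun x => G (2 * x) / G x) atTop (nhds ((2:ℝ) ^ (-q)))) :
    ∃ X ≥ (1:ℝ), ∀ x ≥ X, ∀ l ≥ (1:ℝ),
      (2:ℝ) ^ (-(q+δ)) * l ^ (-(q+δ)) * G x ≤ G (l * x) := by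
  have hlt : (2:ℝ) ^ (-(q+δ)) < (2:ℝ) ^ (-q) := by
    apply Real.rpow_lt_rpow_of_exponent_lt one_lt_two; linarith
  have hev : ∀ᶠ x in atTop, (2:ℝ) ^ (-(q+δ)) < G (2*x) / G x :=
    h2.eventually_const_lt hlt
  obtain ⟨X₀, hX₀⟩ := eventually_atTop.mp hev
  refine ⟨max X₀ 1, le_max_right _ _, ?_⟩
  intro x hx l hl
  have hx1 : (1:ℝ) ≤ x := le_trans (le_max_right _ _) hx
  have hxX₀ : X₀ ≤ x := le_trans (le_max_left _ _) hx
  have hx0 : 0 < x := lt_of_lt_of_le one_pos hx1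
  have step : ∀ y ≥ X₀, (2:ℝ) ^ (-(q+δ)) * G y ≤ G (2*y) := by
    intro y hy
    have := (hX₀ y hy).le
    rw [le_div_iff₀ (hpos y)] at this
    linarith
  have iter : ∀ n : ℕ, ((2:ℝ) ^ (-(q+δ)))^n * G x ≤ G (2^n * x) := by
    intro n
    induction n with
    | zero => simp
    | succ n ih =>
      have h2n : (2:ℝ)^n * x ≥ X₀ := by
        calc X₀ ≤ x := hxX₀
        _ = 1 * x := (one_mul x).symm
        _ ≤ 2^n * x := by
            apply mul_le_mul_of_nonneg_right _ hx0.le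
            exact one_le_pow₀ one_le_two
      calc ((2:ℝ) ^ (-(q+δ)))^(n+1) * G x = (2:ℝ)^(-(q+δ)) * (((2:ℝ)^(-(q+δ)))^n * G x) := by ring
      _ ≤ (2:ℝ)^(-(q+δ)) * G (2^n * x) := by
          apply mul_le_mul_of_nonneg_left ih (Real.rpow_nonneg (by norm_num) _)
      _ ≤ G (2 * (2^n * x)) := step _ h2n
      _ = G (2^(n+1) * x) := by ring_nf
  set n := Nat.ceil (Real.logb 2 l) with hn
  have hlogb : 0 ≤ Real.logb 2 l := Real.logb_nonneg one_lt_two hl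
  have hl0 : 0 < l := lt_of_lt_of_le one_pos hl
  have hln : l ≤ 2^n := by
    have : Real.logb 2 l ≤ n := Nat.le_ceil _
    calc l = (2:ℝ) ^ (Real.logb 2 l) := (Real.rpow_logb two_pos (by norm_num) hl0).symm
    _ ≤ (2:ℝ) ^ (n:ℝ) := Real.rpow_le_rpow_of_exponent_le one_le_two this
    _ = 2^n := by rw [Real.rpow_natCast]
  have hn2l : (2:ℝ)^n ≤ 2 * l := by
    have h1 : (n:ℝ) ≤ Real.logb 2 l + 1 := (Nat.ceil_lt_add_one hlogb).le
    calc (2:ℝ)^n = (2:ℝ) ^ (n:ℝ) := by rw [Real.rpow_natCast]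
    _ ≤ (2:ℝ) ^ (Real.logb 2 l + 1) := Real.rpow_le_rpow_of_exponent_le one_le_two h1
    _ = 2 * l := by
        rw [Real.rpow_add two_pos, Real.rpow_logb two_pos (by norm_num) hl0]
        ring
  calc (2:ℝ) ^ (-(q+δ)) * l ^ (-(q+δ)) * G x = (2*l) ^ (-(q+δ)) * G x := by
        rw [Real.mul_rpow (by norm_num) hl0.le]
  _ ≤ ((2:ℝ)^n) ^ (-(q+δ)) * G x := by
      apply mul_le_mul_of_nonneg_right _ (hpos x).le
      exact Real.rpow_le_rpow_of_nonpos (by positivity) hn2l (by linarith)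
  _ = ((2:ℝ) ^ (-(q+δ)))^n * G x := by
      rw [← Real.rpow_natCast ((2:ℝ) ^ (-(q+δ))) n, ← Real.rpow_mul (by norm_num),
        ← Real.rpow_natCast (2:ℝ) n, ← Real.rpow_mul (by norm_num)]
      ring_nf
  _ ≤ G (2^n * x) := iter n
  _ ≤ G (l * x) := hanti (mul_le_mul_of_nonneg_right hln hx0.le)

/-- **Breiman's lemma.**
If `Θ > 0` has a regularly varying right tail of index `−q` (`q > 0`), and `W ≥ 0` is
independent of `Θ` with `E[W^{q+ε}] < ∞` for some `ε > 0`, then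
`P(ΘW > t)/P(Θ > t) → E[W^q]` as `t → ∞`. -/
theorem breiman_lemma
    {Ω : Type*} [MeasureSpace Ω] [IsProbabilityMeasure (ℙ : Measure Ω)]
    (q : ℝ) (hq : 0 < q)
    (Θ : Ω → ℝ) (hΘmeas : Measurable Θ) (hΘpos : ∀ ω, 0 < Θ ω)
    (hΘtail_pos : ∀ x : ℝ, 0 < ℙ {ω | x < Θ ω})
    (hΘrv : ∀ t : ℝ, 0 < t →
      Tendsto (fun x => (ℙ {ω | t * x < Θ ω}).toReal / (ℙ {ω | x < Θ ω}).toReal)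
        atTop (nhds (t ^ (-q))))
    (W : Ω → ℝ) (hWmeas : Measurable W) (hWnonneg : ∀ ω, 0 ≤ W ω)
    (hindep : IndepFun Θ W ℙ)
    (hmoment : ∃ ε : ℝ, 0 < ε ∧ Integrable (fun ω => W ω ^ (q + ε)) ℙ) :
    Tendsto (fun t => (ℙ {ω | t < Θ ω * W ω}).toReal / (ℙ {ω | t < Θ ω}).toReal)
      atTop (nhds (∫ ω, W ω ^ q ∂ℙ)) := by
  obtain ⟨ε, hε, hWint⟩ := hmoment
  set G : ℝ → ℝ := fun x => (ℙ {ω | x < Θ ω}).toReal with hG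
  have hGpos : ∀ x, 0 < G x := fun x => ENNReal.toReal_pos (hΘtail_pos x).ne' (measure_ne_top _ _)
  have hGanti : Antitone G := by
    intro a b hab
    exact ENNReal.toReal_mono (measure_ne_top _ _)
      (measure_mono fun ω hω => lt_of_le_of_lt hab hω)
  have hG2 : Tendsto (fun x => G (2 * x) / G x) atTop (nhds ((2:ℝ) ^ (-q))) := hΘrv 2 two_pos
  obtain ⟨X₁, hX₁1, hP1⟩ := potter_lower G hGpos hGanti q ε hq hε hG2
  obtain ⟨X₂, hX₂1, hP2⟩ := potter_lower G hGpos hGanti q (ε/2) hq (half_pos hε) hG2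
  set c₁ : ℝ := (2:ℝ) ^ (-(q+ε)) with hc₁
  have hc₁0 : 0 < c₁ := Real.rpow_pos_of_pos two_pos _
  set c₂ : ℝ := (2:ℝ) ^ (-(q+ε/2)) with hc₂
  have hc₂0 : 0 < c₂ := Real.rpow_pos_of_pos two_pos _
  -- measurability of the slice function
  have hS : ∀ t : ℝ, MeasurableSet {p : ℝ × ℝ | t < p.1 * p.2} := fun t =>
    measurableSet_lt measurable_const (measurable_fst.mul measurable_snd)
  have hslice : ∀ t : ℝ, Measurable (fun ω => ℙ {ω' | t < Θ ω' * W ω}) := by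
    intro t
    have h1 : (fun ω => ℙ {ω' | t < Θ ω' * W ω}) =
        (fun w => ((ℙ : Measure Ω).map Θ) ((fun x => (x, w)) ⁻¹' {p : ℝ × ℝ | t < p.1 * p.2})) ∘ W := by
      funext ω
      simp only [Function.comp]
      rw [Measure.map_apply hΘmeas
        (show MeasurableSet ((fun x => (x, W ω)) ⁻¹' {p : ℝ × ℝ | t < p.1 * p.2}) from
          measurableSet_lt measurable_const (measurable_id.mul_const _))]
      rfl
    rw [h1]
    exact (measurable_measure_prodMk_right (hS t)).comp hWmeas
  -- the key identity via independence
  have key : ∀ t : ℝ, (ℙ {ω | t < Θ ω * W ω}).toReal =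
      ∫ ω, (ℙ {ω' | t < Θ ω' * W ω}).toReal ∂ℙ := by
    intro t
    have hpair := (indepFun_iff_map_prod_eq_prod_map_map hΘmeas.aemeasurable
      hWmeas.aemeasurable).mp hindep
    have key0 : ℙ {ω | t < Θ ω * W ω} = ∫⁻ ω, ℙ {ω' | t < Θ ω' * W ω} ∂ℙ := by
      have h1 : {ω | t < Θ ω * W ω} = (fun ω => (Θ ω, W ω)) ⁻¹' {p : ℝ × ℝ | t < p.1 * p.2} := rfl
      rw [h1, ← Measure.map_apply (hΘmeas.prodMk hWmeas) (hS t), hpair,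
        Measure.prod_apply_symm (hS t),
        lintegral_map (measurable_measure_prodMk_right (hS t)) hWmeas]
      refine lintegral_congr fun ω => ?_
      rw [Measure.map_apply hΘmeas
        (show MeasurableSet ((fun x => (x, W ω)) ⁻¹' {p : ℝ × ℝ | t < p.1 * p.2}) from
          measurableSet_lt measurable_const (measurable_id.mul_const _))]
      rfl
    rw [key0, ← integral_toReal (hslice t).aemeasurable
      (ae_of_all _ fun ω => measure_lt_top _ _)]
  -- notation for the integrand ratio
  set H : ℝ → Ω → ℝ := fun t ω => (ℙ {ω' | t < Θ ω' * W ω}).toReal / G t with hH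
  have hHmeas : ∀ t, Measurable (H t) := fun t => ((hslice t).ennreal_toReal).div_const _
  have hHnonneg : ∀ t ω, 0 ≤ H t ω := fun t ω =>
    div_nonneg ENNReal.toReal_nonneg (hGpos t).le
  -- H expressed via G when W ω > 0
  have hHeq : ∀ t : ℝ, ∀ ω, 0 < W ω → H t ω = G (t / W ω) / G t := by
    intro t ω hw
    have : {ω' | t < Θ ω' * W ω} = {ω' | t / W ω < Θ ω'} := by
      ext ω'; exact (div_lt_iff₀ hw).symm
    simp only [hH, hG, this]
  have hHzero : ∀ t : ℝ, 0 ≤ t → ∀ ω, W ω = 0 → H t ω = 0 := by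
    intro t ht ω hw
    have : {ω' | t < Θ ω' * W ω} = (∅ : Set Ω) := by
      ext ω'; simp [hw, not_lt.mpr ht]
    simp [hH, this]
  -- pointwise convergence of H t ω to (W ω) ^ q
  have hpt : ∀ ω, Tendsto (fun t => H t ω) atTop (nhds (W ω ^ q)) := by
    intro ω
    rcases eq_or_lt_of_le (hWnonneg ω) with hw | hw
    · rw [← hw, Real.zero_rpow hq.ne']
      apply Tendsto.congr' _ tendsto_const_nhds
      filter_upwards [eventually_ge_atTop (0:ℝ)] with t ht
      exact (hHzero t ht ω hw.symm).symm
    · have hlim := hΘrv (1 / W ω) (by positivity)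
      have heq : (1 / W ω : ℝ) ^ (-q) = W ω ^ q := by
        rw [one_div, Real.inv_rpow (hWnonneg ω), Real.rpow_neg (hWnonneg ω), inv_inv]
      rw [← heq]
      apply Tendsto.congr _ hlim
      intro t
      have : {ω' | 1 / W ω * t < Θ ω'} = {ω' | t < Θ ω' * W ω} := by
        ext ω'
        rw [Set.mem_setOf_eq, Set.mem_setOf_eq, one_div, inv_mul_lt_iff₀ hw, mul_comm]
      rw [hH, hG]
      simp only [this]
  -- split H into the two pieces
  set F₁ : ℝ → Ω → ℝ := fun t ω => if W ω * X₁ ≤ t then H t ω else 0 with hF₁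
  set F₂ : ℝ → Ω → ℝ := fun t ω => if W ω * X₁ ≤ t then 0 else H t ω with hF₂
  have hsplit : ∀ t ω, H t ω = F₁ t ω + F₂ t ω := by
    intro t ω
    simp only [hF₁, hF₂]
    by_cases h : W ω * X₁ ≤ t <;> simp [h]
  have hAmeas : ∀ t : ℝ, MeasurableSet {ω | W ω * X₁ ≤ t} :=
    fun t => measurableSet_le (hWmeas.mul_const _) measurable_const
  have hF₁meas : ∀ t, Measurable (F₁ t) := fun t =>
    Measurable.ite (hAmeas t) (hHmeas t) measurable_const
  have hF₂meas : ∀ t, Measurable (F₂ t) := fun t =>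
    Measurable.ite (hAmeas t) measurable_const (hHmeas t)
  -- the dominating bound
  set bound : Ω → ℝ := fun ω => c₁⁻¹ * W ω ^ (q + ε) + 1 with hbound
  have hboundInt : Integrable bound ℙ := (hWint.const_mul _).add (integrable_const 1)
  have hbound_nonneg : ∀ ω, 0 ≤ bound ω := by
    intro ω
    have : 0 ≤ W ω ^ (q + ε) := Real.rpow_nonneg (hWnonneg ω) _
    have := hc₁0
    positivity
  have hdom : ∀ t : ℝ, t ≥ X₁ → ∀ ω, F₁ t ω ≤ bound ω := by
    intro t ht ω
    have ht0 : 0 < t := lt_of_lt_of_le (lt_of_lt_of_le one_pos hX₁1) ht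
    simp only [hF₁]
    split
    · rename_i hcase
      rcases eq_or_lt_of_le (hWnonneg ω) with hw | hw
      · rw [hHzero t ht0.le ω hw.symm]; exact hbound_nonneg ω
      · rcases le_or_gt (W ω) 1 with hw1 | hw1
        · -- small w: ratio ≤ 1
          rw [hHeq t ω hw]
          have hle : G (t / W ω) ≤ G t := by
            apply hGanti
            rw [le_div_iff₀ hw]
            nlinarith
          have : G (t / W ω) / G t ≤ 1 := by
            rw [div_le_one (hGpos t)]; exact hle
          have h1 : (1:ℝ) ≤ bound ω := by
            have : 0 ≤ c₁⁻¹ * W ω ^ (q + ε) := by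
              have := Real.rpow_nonneg (hWnonneg ω) (q+ε); positivity
            simp only [hbound]; linarith
          exact le_trans this h1
        · -- large w: Potter bound
          rw [hHeq t ω hw]
          have hx : t / W ω ≥ X₁ := by
            rw [ge_iff_le, le_div_iff₀ hw]
            linarith [hcase]
          have hpot := hP1 (t / W ω) hx (W ω) hw1.le
          have hWt : W ω * (t / W ω) = t := by field_simp
          rw [hWt] at hpot
          have hGq : 0 < G (t / W ω) := hGpos _
          have hwpow : 0 < W ω ^ (-(q+ε)) := Real.rpow_pos_of_pos hw _
          have hstep : G (t / W ω) / G t ≤ c₁⁻¹ * W ω ^ (q + ε) := by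
            rw [div_le_iff₀ (hGpos t)]
            have h2 : c₁ * W ω ^ (-(q+ε)) * (c₁⁻¹ * W ω ^ (q + ε)) = 1 := by
              rw [Real.rpow_neg (hWnonneg ω)]
              field_simp
            calc G (t / W ω) = (c₁ * W ω ^ (-(q+ε)))⁻¹ * (c₁ * W ω ^ (-(q+ε)) * G (t / W ω)) := by
                  field_simp
            _ ≤ (c₁ * W ω ^ (-(q+ε)))⁻¹ * G t := by
                apply mul_le_mul_of_nonneg_left hpot
                positivity
            _ = c₁⁻¹ * W ω ^ (q + ε) * G t := by
                rw [Real.rpow_neg (hWnonneg ω)]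
                field_simp
          calc G (t / W ω) / G t ≤ c₁⁻¹ * W ω ^ (q + ε) := hstep
          _ ≤ bound ω := by simp only [hbound]; linarith
    · exact hbound_nonneg ω
  -- integrability of the pieces
  have hF₁int : ∀ t : ℝ, t ≥ X₁ → Integrable (F₁ t) ℙ := by
    intro t ht
    refine hboundInt.mono' (hF₁meas t).aestronglyMeasurable (ae_of_all _ fun ω => ?_)
    rw [Real.norm_of_nonneg]
    · exact hdom t ht ω
    · simp only [hF₁]; split
      · exact hHnonneg t ω
      · exact le_refl 0
  have hF₁nonneg : ∀ t ω, 0 ≤ F₁ t ω := by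
    intro t ω; simp only [hF₁]; split
    · exact hHnonneg t ω
    · exact le_refl 0
  have hF₂nonneg : ∀ t ω, 0 ≤ F₂ t ω := by
    intro t ω; simp only [hF₂]; split
    · exact le_refl 0
    · exact hHnonneg t ω
  -- dominated convergence for the main part
  have hDCT : Tendsto (fun t => ∫ ω, F₁ t ω ∂ℙ) atTop (nhds (∫ ω, W ω ^ q ∂ℙ)) := by
    apply tendsto_integral_filter_of_dominated_convergence bound
    · filter_upwards with t using (hF₁meas t).aestronglyMeasurable
    · filter_upwards [eventually_ge_atTop X₁] with t ht
      refine ae_of_all _ fun ω => ?_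
      rw [Real.norm_of_nonneg (hF₁nonneg t ω)]
      exact hdom t ht ω
    · exact hboundInt
    · refine ae_of_all _ fun ω => ?_
      apply (hpt ω).congr'
      filter_upwards [eventually_ge_atTop (W ω * X₁)] with t ht
      simp only [hF₁, if_pos ht]
  -- bound on H
  have hnumle1 : ∀ t ω, (ℙ {ω' | t < Θ ω' * W ω}).toReal ≤ 1 := by
    intro t ω
    have := prob_le_one (μ := (ℙ : Measure Ω)) (s := {ω' | t < Θ ω' * W ω})
    simpa using ENNReal.toReal_mono ENNReal.one_ne_top this
  have hHle : ∀ t ω, H t ω ≤ 1 / G t := by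
    intro t ω
    have := hnumle1 t ω
    have hg := hGpos t
    simp only [hH]
    gcongr
  -- integrability of F₂
  have hF₂int : ∀ t, Integrable (F₂ t) ℙ := by
    intro t
    refine (integrable_const (1 / G t)).mono' (hF₂meas t).aestronglyMeasurable
      (ae_of_all _ fun ω => ?_)
    rw [Real.norm_of_nonneg (hF₂nonneg t ω)]
    have hg := hGpos t
    simp only [hF₂]; split
    · positivity
    · exact hHle t ω
  -- bound on the integral of F₂ by a tail probability
  have hBmeas : ∀ t : ℝ, MeasurableSet {ω | t < W ω * X₁} :=
    fun t => measurableSet_lt measurable_const (hWmeas.mul_const _)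
  have hF₂bound : ∀ t, ∫ ω, F₂ t ω ∂ℙ ≤ (ℙ {ω | t < W ω * X₁}).toReal / G t := by
    intro t
    have hg := hGpos t
    have hind : Integrable (Set.indicator {ω | t < W ω * X₁} (fun _ => 1 / G t)) ℙ :=
      (integrable_const (1 / G t)).indicator (hBmeas t)
    calc ∫ ω, F₂ t ω ∂ℙ
        ≤ ∫ ω, Set.indicator {ω | t < W ω * X₁} (fun _ => 1 / G t) ω ∂ℙ := by
          apply integral_mono (hF₂int t) hind
          intro ω
          simp only [hF₂]
          by_cases h : W ω * X₁ ≤ t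
          · rw [if_pos h, Set.indicator_apply]
            split
            · positivity
            · exact le_refl 0
          · rw [if_neg h, Set.indicator_of_mem (by simpa using not_le.mp h)]
            exact hHle t ω
      _ = (ℙ {ω | t < W ω * X₁}).toReal / G t := by
          rw [integral_indicator_const _ (hBmeas t)]
          simp [smul_eq_mul, div_eq_mul_inv, mul_comm, Measure.real]
  -- Markov bound on the tail probability
  set M : ℝ := ∫ ω, W ω ^ (q + ε) ∂ℙ with hMdef
  have hX₁0 : (0:ℝ) < X₁ := lt_of_lt_of_le one_pos hX₁1
  have hX₂0 : (0:ℝ) < X₂ := lt_of_lt_of_le one_pos hX₂1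
  have hMarkov : ∀ t : ℝ, 0 < t →
      (ℙ {ω | t < W ω * X₁}).toReal ≤ M * (t / X₁) ^ (-(q + ε)) := by
    intro t ht
    have ha : (0:ℝ) < (t / X₁) ^ (q + ε) := Real.rpow_pos_of_pos (by positivity) _
    have hsub : {ω | t < W ω * X₁} ⊆ {ω | (t / X₁) ^ (q + ε) ≤ W ω ^ (q + ε)} := by
      intro ω hω
      have h2 : t / X₁ ≤ W ω := by
        rw [div_le_iff₀ hX₁0]
        exact (le_of_lt hω)
      exact Real.rpow_le_rpow (by positivity) h2 (by positivity)
    have h3 := mul_meas_ge_le_integral_of_nonneg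
      (ae_of_all _ fun ω => Real.rpow_nonneg (hWnonneg ω) (q + ε)) hWint ((t / X₁) ^ (q + ε))
    have h4 : (ℙ {ω | t < W ω * X₁}).toReal ≤
        (ℙ {ω | (t / X₁) ^ (q + ε) ≤ W ω ^ (q + ε)}).toReal :=
      ENNReal.toReal_mono (measure_ne_top _ _) (measure_mono hsub)
    have h5 : (t / X₁) ^ (q + ε) * (ℙ {ω | t < W ω * X₁}).toReal ≤ M := by
      calc (t / X₁) ^ (q + ε) * (ℙ {ω | t < W ω * X₁}).toReal
          ≤ (t / X₁) ^ (q + ε) * (ℙ {ω | (t / X₁) ^ (q + ε) ≤ W ω ^ (q + ε)}).toReal :=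
            mul_le_mul_of_nonneg_left h4 ha.le
        _ ≤ M := h3
    rw [Real.rpow_neg (by positivity), ← div_eq_mul_inv, le_div_iff₀ ha]
    linarith [h5]
  -- lower bound on G t from Potter
  have hGlow : ∀ t : ℝ, t ≥ X₂ → c₂ * (t / X₂) ^ (-(q + ε/2)) * G X₂ ≤ G t := by
    intro t ht
    have h1 : t / X₂ ≥ 1 := by rw [ge_iff_le, le_div_iff₀ hX₂0]; linarith
    have := hP2 X₂ le_rfl (t / X₂) h1
    rwa [div_mul_cancel₀ _ hX₂0.ne'] at this
  -- the constant
  set C : ℝ := (M / X₁ ^ (-(q + ε))) * (X₂ ^ (-(q + ε/2)) / (c₂ * G X₂)) with hCdef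
  have hGX₂ := hGpos X₂
  have hM0 : 0 ≤ M := integral_nonneg fun ω => Real.rpow_nonneg (hWnonneg ω) _
  -- eventual bound for ∫ F₂
  have hF₂small : ∀ t : ℝ, t ≥ max (max X₁ X₂) 1 →
      ∫ ω, F₂ t ω ∂ℙ ≤ C * t ^ (-(ε/2)) := by
    intro t ht
    have htX₁ : t ≥ X₁ := le_trans (le_trans (le_max_left _ _) (le_max_left _ _)) ht
    have htX₂ : t ≥ X₂ := le_trans (le_trans (le_max_right _ _) (le_max_left _ _)) ht
    have ht1 : t ≥ 1 := le_trans (le_max_right _ _) ht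
    have ht0 : (0:ℝ) < t := lt_of_lt_of_le one_pos ht1
    have hGlow' := hGlow t htX₂
    have hden : (0:ℝ) < c₂ * (t / X₂) ^ (-(q + ε/2)) * G X₂ := by
      have : (0:ℝ) < (t / X₂) ^ (-(q + ε/2)) := Real.rpow_pos_of_pos (by positivity) _
      positivity
    calc ∫ ω, F₂ t ω ∂ℙ ≤ (ℙ {ω | t < W ω * X₁}).toReal / G t := hF₂bound t
      _ ≤ (M * (t / X₁) ^ (-(q + ε))) / G t :=
          div_le_div_of_nonneg_right (hMarkov t ht0) (hGpos t).le
      _ ≤ (M * (t / X₁) ^ (-(q + ε))) / (c₂ * (t / X₂) ^ (-(q + ε/2)) * G X₂) := by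
          have hnum : (0:ℝ) ≤ M * (t / X₁) ^ (-(q + ε)) := by
            have : (0:ℝ) ≤ (t / X₁) ^ (-(q + ε)) := (Real.rpow_pos_of_pos (by positivity) _).le
            positivity
          exact div_le_div_of_nonneg_left hnum hden hGlow'
      _ = C * t ^ (-(ε/2)) := by
          have e1 : (t / X₁) ^ (-(q + ε)) = t ^ (-(q + ε)) / X₁ ^ (-(q + ε)) :=
            Real.div_rpow ht0.le hX₁0.le _
          have e2 : (t / X₂) ^ (-(q + ε/2)) = t ^ (-(q + ε/2)) / X₂ ^ (-(q + ε/2)) :=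
            Real.div_rpow ht0.le hX₂0.le _
          have e3 : t ^ (-(q + ε)) = t ^ (-(q + ε/2)) * t ^ (-(ε/2)) := by
            rw [← Real.rpow_add ht0]; ring_nf
          have p1 : (0:ℝ) < X₁ ^ (-(q + ε)) := Real.rpow_pos_of_pos hX₁0 _
          have p2 : (0:ℝ) < X₂ ^ (-(q + ε/2)) := Real.rpow_pos_of_pos hX₂0 _
          have p3 : (0:ℝ) < t ^ (-(q + ε/2)) := Real.rpow_pos_of_pos ht0 _
          rw [e1, e2, e3, hCdef]
          field_simp
  -- ∫ F₂ tends to 0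
  have hF₂tendsto : Tendsto (fun t => ∫ ω, F₂ t ω ∂ℙ) atTop (nhds 0) := by
    have hub : Tendsto (fun t : ℝ => C * t ^ (-(ε/2))) atTop (nhds 0) := by
      have := (tendsto_rpow_neg_atTop (by positivity : (0:ℝ) < ε/2)).const_mul C
      simpa using this
    apply tendsto_of_tendsto_of_tendsto_of_le_of_le' tendsto_const_nhds hub
    · filter_upwards with t
      exact integral_nonneg fun ω => hF₂nonneg t ω
    · filter_upwards [eventually_ge_atTop (max (max X₁ X₂) 1)] with t ht
      exact hF₂small t ht
  -- assemble
  have hmain := hDCT.add hF₂tendsto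
  rw [add_zero] at hmain
  apply Tendsto.congr' _ hmain
  filter_upwards [eventually_ge_atTop X₁] with t ht
  symm
  calc (ℙ {ω | t < Θ ω * W ω}).toReal / G t
      = ∫ ω, H t ω ∂ℙ := by rw [key t, ← integral_div]
    _ = ∫ ω, (F₁ t ω + F₂ t ω) ∂ℙ := by simp only [hsplit]
    _ = (∫ ω, F₁ t ω ∂ℙ) + ∫ ω, F₂ t ω ∂ℙ := integral_add (hF₁int t ht) (hF₂int t)
end
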